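/- arXiv:1502.02319 — 4 statements merged into one kernel-verified Lean document; each statement's English description precedes it below -/
import Mathlib

section
/- If I ⊆ ℝ is an interval and λ : I → C^n_sym is continuous, then there exist n continuous functions λ_1,...,λ_n : I → ℂ such that λ(t) = (λ_1(t),...,λ_n(t))* for all t ∈ I. -/
def permSetoid (n : ℕ) : Setoid (Fin n → ℂ) where
  r a b := ∃ π : Equiv.Perm (Fin n), a = b ∘ π
  iseqv := by
    constructor
    · exact fun a => ⟨Equiv.refl _, rfl⟩
    · rintro a b ⟨π, rfl⟩
      exact ⟨π.symm, by funext i; simp⟩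
    · rintro a b c ⟨π, rfl⟩ ⟨ρ, rfl⟩
      exact ⟨π.trans ρ, by funext i; simp⟩

noncomputable def symDist (n : ℕ) (a b : Fin n → ℂ) : ℝ :=
  ⨅ π : Equiv.Perm (Fin n), ⨆ i, dist (a i) (b (π i))

open Set

namespace Kato

def rel (n : ℕ) (a b : Fin n → ℂ) : Prop := ∃ π : Equiv.Perm (Fin n), a = b ∘ π

lemma iSup_reindex {n : ℕ} (F : Fin n → ℝ) (π : Equiv.Perm (Fin n)) :
    ⨆ i, F (π i) = ⨆ i, F i := by
  show sSup _ = sSup _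
  exact congrArg sSup (π.surjective.range_comp F)

lemma symDist_exists_opt (n : ℕ) (a b : Fin n → ℂ) :
    ∃ π : Equiv.Perm (Fin n), (∀ i, dist (a i) (b (π i)) ≤ symDist n a b) := by
  haveI : Nonempty (Equiv.Perm (Fin n)) := ⟨1⟩
  obtain ⟨π0, hπ0⟩ := Finite.exists_min ((fun π => ⨆ i, dist (a i) (b (π i)) : Equiv.Perm (Fin n) → ℝ))
  have h1 : symDist n a b = ⨆ i, dist (a i) (b (π0 i)) := by
    apply le_antisymm
    · exact ciInf_le (Finite.bddBelow_range _) π0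
    · exact le_ciInf hπ0
  refine ⟨π0, fun i => ?_⟩
  rw [h1]
  exact le_ciSup (f := fun j => dist (a j) (b (π0 j))) (Finite.bddAbove_range _) i

lemma symDist_nonneg (n : ℕ) (a b : Fin n → ℂ) : 0 ≤ symDist n a b := by
  apply le_ciInf
  intro π
  exact Real.iSup_nonneg (fun i => dist_nonneg)

lemma symDist_le (n : ℕ) (a b : Fin n → ℂ) (π : Equiv.Perm (Fin n)) (C : ℝ) (hC : 0 ≤ C)
    (h : ∀ i, dist (a i) (b (π i)) ≤ C) : symDist n a b ≤ C := by
  refine le_trans (ciInf_le (Finite.bddBelow_range _) π) ?_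
  exact Real.iSup_le h hC

lemma symDist_le_symm (n : ℕ) (a b : Fin n → ℂ) : symDist n a b ≤ symDist n b a := by
  haveI : Nonempty (Equiv.Perm (Fin n)) := ⟨1⟩
  unfold symDist
  apply le_ciInf
  intro π
  refine le_trans (ciInf_le (Finite.bddBelow_range _) π.symm) (le_of_eq ?_)
  rw [← iSup_reindex (fun i => dist (a i) (b (π.symm i))) π]
  congr 1; funext i; simp [dist_comm]

lemma symDist_symm (n : ℕ) (a b : Fin n → ℂ) : symDist n a b = symDist n b a :=
  le_antisymm (symDist_le_symm n a b) (symDist_le_symm n b a)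


lemma contOn_ite_le {D : Set ℝ} {c : ℝ} {f g : ℝ → ℂ}
    (hf : ContinuousOn f (D ∩ Set.Iic c)) (hg : ContinuousOn g (D ∩ Set.Ici c))
    (hfg : f c = g c) :
    ContinuousOn (fun t => if t ≤ c then f t else g t) D := by
  intro t ht
  rcases lt_trichotomy t c with hlt | heq | hgt
  · have h1 : ContinuousWithinAt f D t :=
      (hf t ⟨ht, le_of_lt hlt⟩).mono_of_mem_nhdsWithin
        (Filter.inter_mem self_mem_nhdsWithin
          (mem_nhdsWithin_of_mem_nhds (Iic_mem_nhds hlt)))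
    apply h1.congr_of_eventuallyEq
    · exact Filter.eventually_of_mem
        (mem_nhdsWithin_of_mem_nhds (Iic_mem_nhds hlt)) (fun t' h => if_pos h)
    · exact if_pos (le_of_lt hlt)
  · subst heq
    have hcD : t ∈ D := ht
    have h1 : ContinuousWithinAt (fun t' => if t' ≤ t then f t' else g t') (D ∩ Set.Iic t) t :=
      (hf t ⟨hcD, le_refl t⟩).congr (fun y hy => if_pos hy.2) (if_pos le_rfl)
    have h2 : ContinuousWithinAt (fun t' => if t' ≤ t then f t' else g t') (D ∩ Set.Ici t) t := by
      refine (hg t ⟨hcD, le_refl t⟩).congr (fun y hy => ?_) (by simp [hfg])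
      by_cases h : y ≤ t
      · have : y = t := le_antisymm h hy.2
        subst this; simp [hfg]
      · exact if_neg h
    exact (h1.union h2).mono (fun y hy => by
      rcases le_total y t with h | h
      · exact Or.inl ⟨hy, h⟩
      · exact Or.inr ⟨hy, h⟩)
  · have h1 : ContinuousWithinAt g D t :=
      (hg t ⟨ht, le_of_lt hgt⟩).mono_of_mem_nhdsWithin
        (Filter.inter_mem self_mem_nhdsWithin
          (mem_nhdsWithin_of_mem_nhds (Ici_mem_nhds hgt)))
    apply h1.congr_of_eventuallyEq
    · exact Filter.eventually_of_mem
        (mem_nhdsWithin_of_mem_nhds (Ioi_mem_nhds hgt)) (fun t' h => if_neg (not_le.2 h))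
    · exact if_neg (not_le.2 hgt)

lemma contOn_ite_lt {D : Set ℝ} {c : ℝ} {f g : ℝ → ℂ}
    (hf : ContinuousOn f (D ∩ Set.Iic c)) (hg : ContinuousOn g (D ∩ Set.Ici c))
    (hfg : f c = g c) :
    ContinuousOn (fun t => if t < c then f t else g t) D := by
  have := contOn_ite_le hf hg hfg
  apply this.congr
  intro y _
  show (if y < c then f y else g y) = (if y ≤ c then f y else g y)
  rcases lt_trichotomy y c with h | h | h
  · rw [if_pos h, if_pos (le_of_lt h)]
  · subst h; rw [if_neg (lt_irrefl y), if_pos le_rfl, hfg]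
  · rw [if_neg (not_lt.2 (le_of_lt h)), if_neg (not_le.2 h)]

section C
variable {n : ℕ} {g : ℝ → Fin n → ℂ}

def Sel (n : ℕ) (g : ℝ → Fin n → ℂ) (F : Fin n → ℝ → ℂ) (A : Set ℝ) : Prop :=
  (∀ i, ContinuousOn (F i) A) ∧ ∀ t ∈ A, rel n (fun i => F i t) (g t)

def QC (n : ℕ) (g : ℝ → Fin n → ℂ) (S : Set ℝ) : Prop :=
  ∀ t₀ ∈ S, ∀ ε > 0, ∃ δ > 0, ∀ t ∈ S, |t - t₀| < δ → symDist n (g t) (g t₀) < ε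

lemma Sel.mono {F : Fin n → ℝ → ℂ} {A B : Set ℝ} (h : Sel n g F A) (hBA : B ⊆ A) :
    Sel n g F B :=
  ⟨fun i => (h.1 i).mono hBA, fun t ht => h.2 t (hBA ht)⟩

lemma QC.mono {S S' : Set ℝ} (h : QC n g S) (hS : S' ⊆ S) : QC n g S' := by
  intro t₀ ht₀ ε hε
  obtain ⟨δ, hδ, hd⟩ := h t₀ (hS ht₀) ε hε
  exact ⟨δ, hδ, fun t ht => hd t (hS ht)⟩

lemma sel_empty {A : Set ℝ} (hA : ∀ t ∈ A, False) : Sel n g (fun _ _ => 0) A := by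
  have : A = ∅ := Set.eq_empty_iff_forall_notMem.2 hA
  subst this
  exact ⟨fun i => continuousOn_empty _, fun t ht => absurd ht (Set.notMem_empty t)⟩

lemma Sel.concat_left {F G : Fin n → ℝ → ℂ} {D : Set ℝ} {c : ℝ} (hc : c ∈ D)
    (hF : Sel n g F (D ∩ Iic c)) (hG : Sel n g G (D ∩ Ici c)) :
    ∃ H, Sel n g H D ∧ (∀ i, ∀ t ∈ D ∩ Iic c, H i t = F i t) := by
  obtain ⟨π1, hπ1⟩ := hF.2 c ⟨hc, le_refl c⟩
  obtain ⟨π2, hπ2⟩ := hG.2 c ⟨hc, le_refl c⟩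
  set σ : Equiv.Perm (Fin n) := π1.trans π2.symm with hσ
  have hbd : ∀ i, F i c = G (σ i) c := by
    intro i
    have h1 : F i c = g c (π1 i) := congrFun hπ1 i
    have h2 : G (σ i) c = g c (π2 (σ i)) := congrFun hπ2 (σ i)
    rw [h1, h2]; simp [hσ]
  refine ⟨fun i t => if t ≤ c then F i t else G (σ i) t, ⟨fun i => ?_, fun t ht => ?_⟩, ?_⟩
  · exact contOn_ite_le (hF.1 i) (hG.1 (σ i)) (hbd i)
  · by_cases h : t ≤ c
    · obtain ⟨π, hπ⟩ := hF.2 t ⟨ht, h⟩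
      exact ⟨π, by funext i; simp only [if_pos h]; exact congrFun hπ i⟩
    · obtain ⟨π, hπ⟩ := hG.2 t ⟨ht, le_of_not_ge h⟩
      refine ⟨σ.trans π, ?_⟩
      funext i
      simp only [if_neg h]
      exact congrFun hπ (σ i)
  · intro i t ht
    exact if_pos ht.2

lemma Sel.concat_right {F G : Fin n → ℝ → ℂ} {D : Set ℝ} {c : ℝ} (hc : c ∈ D)
    (hF : Sel n g F (D ∩ Iic c)) (hG : Sel n g G (D ∩ Ici c)) :
    ∃ H, Sel n g H D ∧ (∀ i, ∀ t ∈ D ∩ Ici c, H i t = G i t) := by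
  obtain ⟨π1, hπ1⟩ := hF.2 c ⟨hc, le_refl c⟩
  obtain ⟨π2, hπ2⟩ := hG.2 c ⟨hc, le_refl c⟩
  set σ : Equiv.Perm (Fin n) := π2.trans π1.symm with hσ
  have hbd : ∀ i, F (σ i) c = G i c := by
    intro i
    have h1 : F (σ i) c = g c (π1 (σ i)) := congrFun hπ1 (σ i)
    have h2 : G i c = g c (π2 i) := congrFun hπ2 i
    rw [h1, h2]; simp [hσ]
  refine ⟨fun i t => if t < c then F (σ i) t else G i t, ⟨fun i => ?_, fun t ht => ?_⟩, ?_⟩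
  · exact contOn_ite_lt (hF.1 (σ i)) (hG.1 i) (hbd i)
  · by_cases h : t < c
    · obtain ⟨π, hπ⟩ := hF.2 t ⟨ht, le_of_lt h⟩
      refine ⟨σ.trans π, ?_⟩
      funext i
      simp only [if_pos h]
      exact congrFun hπ (σ i)
    · obtain ⟨π, hπ⟩ := hG.2 t ⟨ht, le_of_not_gt h⟩
      exact ⟨π, by funext i; simp only [if_neg h]; exact congrFun hπ i⟩
  · intro i t ht
    exact if_neg (not_lt.2 ht.2)

end C

section D
variable {n : ℕ} {g : ℝ → Fin n → ℂ}

lemma icc_sel {J : Set ℝ} (hJ : J.OrdConnected)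
    (hloc : ∀ t ∈ J, ∃ δ > 0, ∃ F, Sel n g F (J ∩ Metric.ball t δ))
    {a b : ℝ} (ha : a ∈ J) (hb : b ∈ J) :
    ∃ F, Sel n g F (J ∩ Icc a b) := by
  rcases le_or_gt a b with hab | hab
  swap
  · exact ⟨_, sel_empty (fun t ht => absurd (le_trans ht.2.1 ht.2.2) (not_le.2 hab))⟩
  set A := {c ∈ Icc a b | ∃ F, Sel n g F (J ∩ Icc a c)} with hA
  have haA : a ∈ A := by
    obtain ⟨δ, hδ, F, hF⟩ := hloc a ha
    refine ⟨⟨le_refl a, hab⟩, F, hF.mono ?_⟩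
    rintro t ⟨htJ, ht1, ht2⟩
    have : t = a := le_antisymm ht2 ht1
    subst this
    exact ⟨htJ, Metric.mem_ball_self hδ⟩
  have hbdd : BddAbove A := ⟨b, fun c hc => hc.1.2⟩
  set T := sSup A with hT
  have haT : a ≤ T := le_csSup hbdd haA
  have hTb : T ≤ b := csSup_le ⟨a, haA⟩ (fun c hc => hc.1.2)
  have hTJ : T ∈ J := hJ.out ha hb ⟨haT, hTb⟩
  obtain ⟨δ, hδ, G, hG⟩ := hloc T hTJ
  obtain ⟨c, hcA, hc⟩ : ∃ c ∈ A, T - δ < c :=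
    exists_lt_of_lt_csSup ⟨a, haA⟩ (by linarith)
  have hcT : c ≤ T := le_csSup hbdd hcA
  obtain ⟨F1, hF1⟩ := hcA.2
  set m := min b (T + δ/2) with hm
  have hcJ : c ∈ J := hJ.out ha hb hcA.1
  have hcm : c ≤ m := le_min hcA.1.2 (by linarith)
  have ham : a ≤ m := le_trans hcA.1.1 hcm
  have hsub1 : J ∩ Icc a m ∩ Iic c = J ∩ Icc a c := by
    ext t; constructor
    · rintro ⟨⟨h1, h2, _⟩, h4⟩; exact ⟨h1, h2, h4⟩
    · rintro ⟨h1, h2, h3⟩; exact ⟨⟨h1, h2, le_trans h3 hcm⟩, h3⟩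
  have hsub2 : J ∩ Icc a m ∩ Ici c ⊆ J ∩ Metric.ball T δ := by
    rintro t ⟨⟨h1, _, h3⟩, (h4 : c ≤ t)⟩
    refine ⟨h1, ?_⟩
    rw [Real.ball_eq_Ioo]
    have h5 : t ≤ T + δ/2 := le_trans h3 (min_le_right _ _)
    exact ⟨by linarith, by linarith⟩
  have hcD : c ∈ J ∩ Icc a m := ⟨hcJ, hcA.1.1, hcm⟩
  obtain ⟨H, hH, -⟩ := Sel.concat_left hcD (hF1.mono hsub1.subset) (hG.mono hsub2)
  have hmA : m ∈ A := ⟨⟨ham, min_le_left _ _⟩, H, hH⟩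
  have hmT : m ≤ T := le_csSup hbdd hmA
  have hbT : b ≤ T + δ/2 := by
    by_contra h
    push_neg at h
    have : m = T + δ/2 := min_eq_right (le_of_lt h)
    rw [this] at hmT; linarith
  have hmb : m = b := min_eq_left hbT
  rw [hmb] at hmA
  exact hmA.2

lemma dep_chain {α : Type*} (P : ℕ → α → Prop) (Q : ℕ → α → α → Prop)
    (h0 : ∃ x, P 0 x)
    (hstep : ∀ k x, P k x → ∃ y, P (k+1) y ∧ Q k x y) :
    ∃ f : ℕ → α, (∀ k, P k (f k)) ∧ ∀ k, Q k (f k) (f (k+1)) := by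
  obtain ⟨x0, hx0⟩ := h0
  choose step hP hQ using hstep
  let f : ∀ k, {x // P k x} := fun k =>
    Nat.rec ⟨x0, hx0⟩ (fun k prev => ⟨step k prev.1 prev.2, hP k prev.1 prev.2⟩) k
  exact ⟨fun k => (f k).1, fun k => (f k).2, fun k => hQ k (f k).1 (f k).2⟩

lemma union_sel (D : ℕ → Set ℝ) (hmono : Monotone D)
    (h0 : ∃ F, Sel n g F (D 0))
    (hstep : ∀ k (F : Fin n → ℝ → ℂ), Sel n g F (D k) →
      ∃ F', Sel n g F' (D (k+1)) ∧ ∀ i, ∀ t ∈ D k, F' i t = F i t)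
    (hnbhd : ∀ t ∈ ⋃ k, D k, ∃ k, ∃ ε > 0, (⋃ j, D j) ∩ Metric.ball t ε ⊆ D k) :
    ∃ F, Sel n g F (⋃ k, D k) := by
  classical
  obtain ⟨f, hSel, hQ⟩ := dep_chain (fun k F => Sel n g F (D k))
    (fun k F F' => ∀ i, ∀ t ∈ D k, F' i t = F i t) h0 hstep
  have hcompat : ∀ k j, j ≤ k → ∀ i, ∀ t ∈ D j, f k i t = f j i t := by
    intro k
    induction k with
    | zero => intro j hj i t ht; rw [Nat.le_zero.1 hj]
    | succ k ih =>
      intro j hj i t ht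
      rcases Nat.lt_or_ge j (k+1) with h | h
      · have hjk : j ≤ k := Nat.lt_succ_iff.1 h
        rw [hQ k i t (hmono hjk ht), ih j hjk i t ht]
      · have : j = k + 1 := le_antisymm hj h
        rw [this]
  set U := ⋃ k, D k with hU
  refine ⟨fun i t => if h : ∃ k, t ∈ D k then f h.choose i t else 0, fun i => ?_, fun t ht => ?_⟩
  · intro t ht
    obtain ⟨k, ε, hε, hsub⟩ := hnbhd t ht
    have heq : ∀ s ∈ U ∩ Metric.ball t ε,
        (fun s => if h : ∃ k, s ∈ D k then f h.choose i s else 0) s = f k i s := by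
      intro s hs
      have hsk : s ∈ D k := hsub hs
      have hex : ∃ j, s ∈ D j := ⟨k, hsk⟩
      show (if h : ∃ k, s ∈ D k then f h.choose i s else 0) = f k i s
      rw [dif_pos hex]
      have h1 := hcompat (max hex.choose k) hex.choose (le_max_left _ _) i s hex.choose_spec
      have h2 := hcompat (max hex.choose k) k (le_max_right _ _) i s hsk
      rw [← h1, h2]
    have hmem : U ∩ Metric.ball t ε ∈ nhdsWithin t U :=
      Filter.inter_mem self_mem_nhdsWithin
        (mem_nhdsWithin_of_mem_nhds (Metric.ball_mem_nhds t hε))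
    have hcwa : ContinuousWithinAt (f k i) U t :=
      (((hSel k).1 i).mono hsub t ⟨ht, Metric.mem_ball_self hε⟩).mono_of_mem_nhdsWithin hmem
    refine hcwa.congr_of_eventuallyEq (Filter.eventually_of_mem hmem heq) ?_
    exact heq t ⟨ht, Metric.mem_ball_self hε⟩
  · obtain ⟨k0, hk0⟩ : ∃ k, t ∈ D k := Set.mem_iUnion.1 ht
    have hex : ∃ k, t ∈ D k := ⟨k0, hk0⟩
    obtain ⟨π, hπ⟩ := (hSel hex.choose).2 t hex.choose_spec
    refine ⟨π, ?_⟩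
    funext i
    simp only [dif_pos hex]
    exact congrFun hπ i

end D

section E
variable {n : ℕ} {g : ℝ → Fin n → ℂ}

lemma inter_Icc_Iic {J : Set ℝ} {x y z : ℝ} (hyz : y ≤ z) :
    J ∩ Icc x z ∩ Iic y = J ∩ Icc x y := by
  ext t; constructor
  · rintro ⟨⟨h1, h2, _⟩, (h4 : t ≤ y)⟩; exact ⟨h1, h2, h4⟩
  · rintro ⟨h1, h2, h3⟩; exact ⟨⟨h1, h2, le_trans h3 hyz⟩, h3⟩

lemma inter_Icc_Ici {J : Set ℝ} {x y z : ℝ} (hxy : x ≤ y) :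
    J ∩ Icc x z ∩ Ici y = J ∩ Icc y z := by
  ext t; constructor
  · rintro ⟨⟨h1, _, h3⟩, (h4 : y ≤ t)⟩; exact ⟨h1, h4, h3⟩
  · rintro ⟨h1, h2, h3⟩; exact ⟨⟨h1, le_trans hxy h2, h3⟩, h2⟩

lemma exists_cofinal_above {J : Set ℝ} {t0 : ℝ} (ht0 : t0 ∈ J) :
    ∃ β : ℕ → ℝ, (∀ k, β k ∈ J) ∧ Monotone β ∧ (∀ k, t0 ≤ β k) ∧ ∀ t ∈ J, ∃ k, t ≤ β k := by
  have hraw : ∃ γ : ℕ → ℝ, (∀ k, γ k ∈ J) ∧ ∀ t ∈ J, ∃ k, t ≤ γ k := by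
    by_cases hb : BddAbove J
    · by_cases hs : sSup J ∈ J
      · exact ⟨fun _ => sSup J, fun _ => hs, fun t ht => ⟨0, le_csSup hb ht⟩⟩
      · have h1 : ∀ k : ℕ, ∃ x ∈ J, sSup J - 1/(k+1) < x := by
          intro k
          apply exists_lt_of_lt_csSup ⟨t0, ht0⟩
          have : (0:ℝ) < 1/(k+1) := by positivity
          linarith
        choose γ hγJ hγgt using h1
        refine ⟨γ, hγJ, fun t ht => ?_⟩
        have htlt : t < sSup J := lt_of_le_of_ne (le_csSup hb ht) (fun h => hs (h ▸ ht))
        obtain ⟨k, hk⟩ := exists_nat_one_div_lt (sub_pos.2 htlt)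
        exact ⟨k, le_of_lt (by have := hγgt k; push_cast at hk ⊢; linarith)⟩
    · rw [not_bddAbove_iff] at hb
      have h1 : ∀ k : ℕ, ∃ x ∈ J, (k:ℝ) < x := fun k => hb k
      choose γ hγJ hγgt using h1
      refine ⟨γ, hγJ, fun t ht => ?_⟩
      obtain ⟨k, hk⟩ := exists_nat_ge t
      exact ⟨k, le_of_lt (lt_of_le_of_lt hk (hγgt k))⟩
  obtain ⟨γ, hγJ, hγcof⟩ := hraw
  have hJmax : ∀ᵉ (x ∈ J) (y ∈ J), x ⊔ y ∈ J := by
    intro x hx y hy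
    rcases le_total x y with h | h
    · rwa [sup_eq_right.2 h]
    · rwa [sup_eq_left.2 h]
  set γ' : ℕ → ℝ := fun k => t0 ⊔ γ k with hγ'
  have hγ'J : ∀ k, γ' k ∈ J := fun k => hJmax t0 ht0 (γ k) (hγJ k)
  have hne : ∀ k : ℕ, (Finset.range (k+1)).Nonempty := fun k => ⟨0, by simp⟩
  refine ⟨fun k => (Finset.range (k+1)).sup' (hne k) γ', fun k => ?_, fun k l hkl => ?_, fun k => ?_, fun t ht => ?_⟩
  · exact Finset.sup'_mem J hJmax _ (hne k) γ' (fun i _ => hγ'J i)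
  · exact Finset.sup'_mono γ' (Finset.range_subset_range.2 (by omega)) (hne k)
  · exact le_trans (le_sup_left) (Finset.le_sup' γ' (by simp : 0 ∈ Finset.range (k+1)))
  · obtain ⟨k, hk⟩ := hγcof t ht
    exact ⟨k, le_trans hk (le_trans le_sup_right
      (Finset.le_sup' γ' (by simp : k ∈ Finset.range (k+1))))⟩

lemma exists_cofinal_below {J : Set ℝ} {t0 : ℝ} (ht0 : t0 ∈ J) :
    ∃ α : ℕ → ℝ, (∀ k, α k ∈ J) ∧ Antitone α ∧ (∀ k, α k ≤ t0) ∧ ∀ t ∈ J, ∃ k, α k ≤ t := by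
  have hneg : -t0 ∈ (fun x : ℝ => -x) '' J := ⟨t0, ht0, rfl⟩
  obtain ⟨β, hβJ, hβmono, hβt0, hβcof⟩ := exists_cofinal_above hneg
  refine ⟨fun k => -β k, fun k => ?_, fun k l hkl => neg_le_neg (hβmono hkl), fun k => ?_, fun t ht => ?_⟩
  · obtain ⟨x, hx, hxe⟩ := hβJ k
    show -β k ∈ J
    rw [← hxe]; simpa using hx
  · show -β k ≤ t0
    have := hβt0 k; linarith
  · obtain ⟨k, hk⟩ := hβcof (-t) ⟨t, ht, rfl⟩
    exact ⟨k, show -β k ≤ t by linarith⟩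

lemma glue_global {J : Set ℝ} (hJ : J.OrdConnected)
    (hloc : ∀ t ∈ J, ∃ δ > 0, ∃ F, Sel n g F (J ∩ Metric.ball t δ)) :
    ∃ F, Sel n g F J := by
  rcases Set.eq_empty_or_nonempty J with h | ⟨t0, ht0⟩
  · subst h; exact ⟨_, sel_empty (fun t ht => ht)⟩
  obtain ⟨β, hβJ, hβmono, hβt0, hβcof⟩ := exists_cofinal_above ht0
  obtain ⟨α, hαJ, hαanti, hαt0, hαcof⟩ := exists_cofinal_below ht0
  set D : ℕ → Set ℝ := fun k => J ∩ Icc (α k) (β k) with hD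
  have hαβ : ∀ k, α k ≤ β k := fun k => le_trans (hαt0 k) (hβt0 k)
  have hDU : (⋃ k, D k) = J := by
    apply subset_antisymm (Set.iUnion_subset fun k => Set.inter_subset_left)
    intro t ht
    obtain ⟨k1, hk1⟩ := hαcof t ht
    obtain ⟨k2, hk2⟩ := hβcof t ht
    exact Set.mem_iUnion.2 ⟨max k1 k2, ht,
      le_trans (hαanti (le_max_left _ _)) hk1, le_trans hk2 (hβmono (le_max_right _ _))⟩
  have := union_sel (n := n) (g := g) D ?_ ?_ ?_ ?_
  · rwa [hDU] at this
  · intro k l hkl t ht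
    exact ⟨ht.1, le_trans (hαanti hkl) ht.2.1, le_trans ht.2.2 (hβmono hkl)⟩
  · exact icc_sel hJ hloc (hαJ 0) (hβJ 0)
  · intro k F hF
    obtain ⟨G1, hG1⟩ := icc_sel hJ hloc (hαJ (k+1)) (hαJ k)
    obtain ⟨G2, hG2⟩ := icc_sel hJ hloc (hβJ k) (hβJ (k+1))
    have hc1 : α k ∈ J ∩ Icc (α (k+1)) (β k) := ⟨hαJ k, hαanti (Nat.le_succ k), hαβ k⟩
    obtain ⟨H1, hH1, hH1eq⟩ := Sel.concat_right hc1
      (hG1.mono (inter_Icc_Iic (hαβ k)).subset)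
      (by rw [inter_Icc_Ici (hαanti (Nat.le_succ k))]; exact hF)
    have hc2 : β k ∈ D (k+1) := ⟨hβJ k, le_trans (hαanti (Nat.le_succ k)) (hαβ k), hβmono (Nat.le_succ k)⟩
    obtain ⟨H2, hH2, hH2eq⟩ := Sel.concat_left hc2
      (by rw [inter_Icc_Iic (hβmono (Nat.le_succ k))]; exact hH1)
      (hG2.mono (inter_Icc_Ici (le_trans (hαanti (Nat.le_succ k)) (hαβ k))).subset)
    refine ⟨H2, hH2, fun i t ht => ?_⟩
    have ht1 : t ∈ D (k+1) ∩ Iic (β k) := by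
      rw [inter_Icc_Iic (hβmono (Nat.le_succ k))]
      exact ⟨ht.1, le_trans (hαanti (Nat.le_succ k)) ht.2.1, ht.2.2⟩
    have ht2 : t ∈ J ∩ Icc (α (k+1)) (β k) ∩ Ici (α k) := by
      rw [inter_Icc_Ici (hαanti (Nat.le_succ k))]
      exact ht
    rw [hH2eq i t ht1, hH1eq i t ht2]
  · intro t ht
    have htJ : t ∈ J := hDU ▸ ht
    have hleft : ∃ k, ∃ ε > (0:ℝ), ∀ s ∈ J, t - ε < s → α k ≤ s := by
      by_cases h : ∃ s ∈ J, s < t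
      · obtain ⟨s, hsJ, hst⟩ := h
        obtain ⟨k, hk⟩ := hαcof s hsJ
        exact ⟨k, t - s, by linarith, fun s' _ hgt => by linarith⟩
      · push_neg at h
        obtain ⟨k, hk⟩ := hαcof t htJ
        exact ⟨k, 1, one_pos, fun s hsJ _ => le_trans hk (h s hsJ)⟩
    have hright : ∃ k, ∃ ε > (0:ℝ), ∀ s ∈ J, s < t + ε → s ≤ β k := by
      by_cases h : ∃ s ∈ J, t < s
      · obtain ⟨s, hsJ, hst⟩ := h
        obtain ⟨k, hk⟩ := hβcof s hsJ
        exact ⟨k, s - t, by linarith, fun s' _ hlt => by linarith⟩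
      · push_neg at h
        obtain ⟨k, hk⟩ := hβcof t htJ
        exact ⟨k, 1, one_pos, fun s hsJ _ => le_trans (h s hsJ) hk⟩
    obtain ⟨k1, ε1, hε1, hL⟩ := hleft
    obtain ⟨k2, ε2, hε2, hR⟩ := hright
    refine ⟨max k1 k2, min ε1 ε2, lt_min hε1 hε2, ?_⟩
    rintro s ⟨hsU, hball⟩
    have hsJ : s ∈ J := hDU ▸ hsU
    rw [Metric.mem_ball, Real.dist_eq, abs_lt] at hball
    refine ⟨hsJ, ?_, ?_⟩
    · exact le_trans (hαanti (le_max_left _ _))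
        (hL s hsJ (by have := hball.1; have := min_le_left ε1 ε2; linarith))
    · exact le_trans
        (hR s hsJ (by have := hball.2; have := min_le_right ε1 ε2; linarith))
        (hβmono (le_max_right _ _))

end E


section F
variable {n : ℕ}

lemma gap_lemma (a : Fin n → ℂ) (h : ∃ i j, a i ≠ a j) :
    ∃ (A : Finset (Fin n)) (ρ : ℝ), 0 < ρ ∧ A.Nonempty ∧ (Aᶜ : Finset (Fin n)).Nonempty ∧
      ∀ i ∈ A, ∀ j ∉ A, 4 * ρ < dist (a i) (a j) := by
  classical
  obtain ⟨i0, j0, hij⟩ := h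
  set f : Fin n → ℝ := fun i => dist (a i) (a i0) with hf
  have hne : (Finset.univ : Finset (Fin n)).Nonempty := ⟨i0, Finset.mem_univ _⟩
  set d : ℝ := Finset.univ.sup' hne f with hd
  have hdj : 0 < f j0 := by
    simp only [hf, dist_pos]
    exact fun h => hij h.symm
  have hdpos : 0 < d := lt_of_lt_of_le hdj (Finset.le_sup' f (Finset.mem_univ j0))
  have hnpos : 0 < (n:ℝ) := by
    have : 0 < n := Fin.pos i0
    exact_mod_cast this
  have hpigeon : ∃ k : Fin n, ∀ i, f i ∉ Set.Ioc ((k:ℝ) * d / n) (((k:ℝ) + 1) * d / n) := by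
    by_contra hcon
    push_neg at hcon
    choose c hc using hcon
    have key : ∀ k k' : Fin n, k < k' → c k ≠ c k' := by
      intro k k' hlt heq
      have h1 := (hc k).2
      have h2 := (hc k').1
      rw [heq] at h1
      have hnat : (k:ℕ) < (k':ℕ) := hlt
      have hcast : ((k:ℕ):ℝ) + 1 ≤ ((k':ℕ):ℝ) := by exact_mod_cast Nat.succ_le_of_lt hnat
      have h3 : ((k:ℝ) + 1) * d / n ≤ ((k':ℝ)) * d / n := by gcongr
      linarith
    have hinj : Function.Injective c := by
      intro k k' hkk'
      by_contra hne'
      rcases lt_or_gt_of_ne hne' with hlt | hlt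
      · exact key k k' hlt hkk'
      · exact key k' k hlt hkk'.symm
    have hsurj : Function.Surjective c := Finite.injective_iff_surjective.1 hinj
    obtain ⟨k, hk⟩ := hsurj i0
    have h1 := (hc k).1
    rw [hk] at h1
    have hfi0 : f i0 = 0 := by simp [hf]
    rw [hfi0] at h1
    have : 0 ≤ (k:ℝ) * d / n := by positivity
    linarith
  obtain ⟨k, hk⟩ := hpigeon
  set A : Finset (Fin n) := Finset.univ.filter (fun i => f i ≤ (k:ℝ) * d / n) with hA
  have hi0A : i0 ∈ A := by
    simp only [hA, Finset.mem_filter, Finset.mem_univ, true_and, hf]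
    simp only [dist_self]
    positivity
  obtain ⟨im, -, him⟩ := Finset.exists_mem_eq_sup' hne f
  have hfim : f im = d := him.symm
  have hkd : (k:ℝ) * d / n < d := by
    rw [div_lt_iff₀ hnpos]
    have h1 : (k:ℝ) ≤ (n:ℝ) - 1 := by
      have : (k:ℕ) + 1 ≤ n := k.2
      have := (by exact_mod_cast this : ((k:ℕ):ℝ) + 1 ≤ (n:ℝ))
      linarith
    nlinarith
  have himA : im ∉ A := by
    simp only [hA, Finset.mem_filter, Finset.mem_univ, true_and, not_le, hfim]
    exact hkd
  have hsep : ∀ i ∈ A, ∀ j ∉ A, d / n < dist (a i) (a j) := by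
    intro i hi j hj
    simp only [hA, Finset.mem_filter, Finset.mem_univ, true_and, not_le] at hi hj
    have hji : ((k:ℝ) + 1) * d / n < f j := by
      rcases lt_or_ge (((k:ℝ) + 1) * d / n) (f j) with h | h
      · exact h
      · exact absurd ⟨hj, h⟩ (hk j)
    have htri : f j - f i ≤ dist (a i) (a j) := by
      have h2 := abs_dist_sub_le (a j) (a i) (a i0)
      rw [dist_comm (a j) (a i)] at h2
      calc f j - f i ≤ |f j - f i| := le_abs_self _
        _ ≤ dist (a i) (a j) := h2
    have hdn : ((k:ℝ) + 1) * d / n - (k:ℝ) * d / n = d / n := by ring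
    linarith
  refine ⟨A, d / (8 * n), by positivity, ⟨i0, hi0A⟩, ⟨im, Finset.mem_compl.2 himA⟩, ?_⟩
  intro i hi j hj
  have h4 : 4 * (d / (8 * n)) = d / (2 * n) := by ring
  rw [h4]
  have hlt : d / (2 * n) < d / n := by
    rw [div_lt_div_iff₀ (by positivity) hnpos]
    nlinarith
  linarith [hsep i hi j hj]

end F

section G
variable {n : ℕ} {g : ℝ → Fin n → ℂ}

noncomputable def gcl (g : ℝ → Fin n → ℂ) (C : ℝ → Finset (Fin n)) (p : ℕ) : ℝ → Fin p → ℂ :=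
  fun t i => if h : (C t).card = p then g t ((C t).orderIsoOfFin h i) else 0

lemma cluster_qc {U : Set ℝ} {ρ : ℝ} (hρ : 0 < ρ)
    (hU : QC n g U)
    (C : ℝ → Finset (Fin n)) (p : ℕ)
    (hcard : ∀ t ∈ U, (C t).card = p)
    (hstable : ∀ t ∈ U, ∀ s ∈ U, ∀ π' : Equiv.Perm (Fin n),
      (∀ i, dist (g t i) (g s (π' i)) < 2*ρ) → ∀ i, (i ∈ C t ↔ π' i ∈ C s)) :
    QC p (gcl g C p) U := by
  classical
  intro t₀ ht₀ ε hε
  obtain ⟨δ, hδ, hb⟩ := hU t₀ ht₀ (min ε (2*ρ)) (lt_min hε (by linarith))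
  refine ⟨δ, hδ, fun t ht hlt => ?_⟩
  have hsym := hb t ht hlt
  obtain ⟨π', hπ'⟩ := symDist_exists_opt n (g t) (g t₀)
  have hmt : ∀ i, dist (g t i) (g t₀ (π' i)) < 2*ρ :=
    fun i => lt_of_le_of_lt (hπ' i) (lt_of_lt_of_le hsym (min_le_right _ _))
  have hiff := hstable t ht t₀ ht₀ π' hmt
  set e₁ := (C t).orderIsoOfFin (hcard t ht) with he₁
  set e₂ := (C t₀).orderIsoOfFin (hcard t₀ ht₀) with he₂
  have hiff' : ∀ y : Fin n, π'.symm y ∈ C t ↔ y ∈ C t₀ := by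
    intro y
    have := hiff (π'.symm y)
    rwa [Equiv.apply_symm_apply] at this
  set σ : {x // x ∈ C t} ≃ {x // x ∈ C t₀} :=
    { toFun := fun x => ⟨π' x, (hiff x).1 x.2⟩
      invFun := fun y => ⟨π'.symm y, (hiff' y).2 y.2⟩
      left_inv := fun x => by ext; simp
      right_inv := fun y => by ext; simp } with hσ
  set τ : Equiv.Perm (Fin p) := (e₁.toEquiv.trans σ).trans e₂.toEquiv.symm with hτ
  have hbound : ∀ i : Fin p,
      dist (gcl g C p t i) (gcl g C p t₀ (τ i)) ≤ symDist n (g t) (g t₀) := by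
    intro i
    unfold gcl
    have he : (e₂ (τ i) : Fin n) = π' (e₁ i) := by
      have h1 : e₂.toEquiv (τ i) = σ (e₁.toEquiv i) := by
        simp [hτ]
      have := congrArg Subtype.val h1
      simpa [hσ] using this
    simp only [dif_pos (hcard t ht), dif_pos (hcard t₀ ht₀)]
    show dist (g t (e₁ i)) (g t₀ (e₂ (τ i))) ≤ _
    rw [he]
    exact hπ' (e₁ i)
  have := symDist_le p _ _ τ (symDist n (g t) (g t₀)) (symDist_nonneg n _ _) hbound
  exact lt_of_le_of_lt this (lt_of_lt_of_le hsym (min_le_left _ _))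

end G

section H
variable {n : ℕ} {g : ℝ → Fin n → ℂ}

lemma local_sel
    (IH : ∀ m, m < n → ∀ S : Set ℝ, S.OrdConnected → ∀ gm : ℝ → Fin m → ℂ,
      QC m gm S → ∃ F, Sel m gm F S)
    {S : Set ℝ} (hS : S.OrdConnected) (hg : QC n g S) {t0 : ℝ} (ht0 : t0 ∈ S)
    (hne : ∃ i j, g t0 i ≠ g t0 j) :
    ∃ δ > 0, ∃ F, Sel n g F (S ∩ Metric.ball t0 δ) := by
  classical
  obtain ⟨A, ρ, hρ, hAne, hAcne, hsep⟩ := gap_lemma (g t0) hne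
  obtain ⟨δ0, hδ0, hδb⟩ := hg t0 ht0 ρ hρ
  set U := S ∩ Metric.ball t0 δ0 with hUdef
  have hUS : U ⊆ S := Set.inter_subset_left
  have ht0U : t0 ∈ U := ⟨ht0, Metric.mem_ball_self hδ0⟩
  have hUconn : U.OrdConnected := hS.inter (by rw [Real.ball_eq_Ioo]; exact Set.ordConnected_Ioo)
  have hUsym : ∀ t ∈ U, symDist n (g t) (g t0) < ρ := by
    rintro t ⟨htS, htb⟩
    exact hδb t htS (by rwa [Metric.mem_ball, Real.dist_eq] at htb)
  have hmatch : ∀ t ∈ U, ∃ π : Equiv.Perm (Fin n), ∀ i, dist (g t i) (g t0 (π i)) < ρ := by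
    intro t ht
    obtain ⟨π, hπ⟩ := symDist_exists_opt n (g t) (g t0)
    exact ⟨π, fun i => lt_of_le_of_lt (hπ i) (hUsym t ht)⟩
  set C : ℝ → Finset (Fin n) := fun t => Finset.univ.filter
      (fun i => ∃ j ∈ A, dist (g t i) (g t0 j) < ρ) with hC
  have hfA : ∀ t ∈ U, ∀ π : Equiv.Perm (Fin n),
      (∀ i, dist (g t i) (g t0 (π i)) < ρ) → ∀ i, (i ∈ C t ↔ π i ∈ A) := by
    intro t _ π hπ i
    simp only [hC, Finset.mem_filter, Finset.mem_univ, true_and]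
    constructor
    · rintro ⟨j, hjA, hd⟩
      by_contra hcon
      have h1 := hsep j hjA (π i) hcon
      have htri : dist (g t0 j) (g t0 (π i)) ≤ dist (g t i) (g t0 j) + dist (g t i) (g t0 (π i)) := by
        rw [dist_comm (g t i) (g t0 j)]
        exact dist_triangle _ _ _
      have h2 := hπ i
      linarith
    · intro hA'
      exact ⟨π i, hA', hπ i⟩
  have hcard : ∀ t ∈ U, (C t).card = A.card := by
    intro t ht
    obtain ⟨π, hπ⟩ := hmatch t ht
    have hCeq : C t = A.image π.symm := by
      ext i
      simp only [Finset.mem_image]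
      constructor
      · intro hi
        exact ⟨π i, (hfA t ht π hπ i).1 hi, π.symm_apply_apply i⟩
      · rintro ⟨j, hj, rfl⟩
        apply (hfA t ht π hπ (π.symm j)).2
        rwa [π.apply_symm_apply]
    rw [hCeq, Finset.card_image_of_injective _ π.symm.injective]
  have hstable : ∀ t ∈ U, ∀ s ∈ U, ∀ π' : Equiv.Perm (Fin n),
      (∀ i, dist (g t i) (g s (π' i)) < 2*ρ) → ∀ i, (i ∈ C t ↔ π' i ∈ C s) := by
    intro t ht s hs π' hπ' i
    obtain ⟨πt, hπt⟩ := hmatch t ht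
    obtain ⟨πs, hπs⟩ := hmatch s hs
    rw [hfA t ht πt hπt i, hfA s hs πs hπs (π' i)]
    have htri : dist (g t0 (πt i)) (g t0 (πs (π' i))) < 4 * ρ := by
      have d1 := hπt i
      have d2 := hπ' i
      have d3 := hπs (π' i)
      have t1 : dist (g t0 (πt i)) (g t0 (πs (π' i))) ≤
          dist (g t i) (g t0 (πt i)) + dist (g t i) (g s (π' i))
            + dist (g s (π' i)) (g t0 (πs (π' i))) := by
        calc dist (g t0 (πt i)) (g t0 (πs (π' i)))
            ≤ dist (g t0 (πt i)) (g s (π' i)) + dist (g s (π' i)) (g t0 (πs (π' i))) :=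
              dist_triangle _ _ _
          _ ≤ (dist (g t0 (πt i)) (g t i) + dist (g t i) (g s (π' i)))
              + dist (g s (π' i)) (g t0 (πs (π' i))) := by
              have := dist_triangle (g t0 (πt i)) (g t i) (g s (π' i))
              linarith
          _ = _ := by rw [dist_comm (g t0 (πt i)) (g t i)]
      linarith
    constructor
    · intro h1
      by_contra h2
      have := hsep (πt i) h1 (πs (π' i)) h2
      linarith
    · intro h1
      by_contra h2
      have := hsep (πs (π' i)) h1 (πt i) h2
      rw [dist_comm] at this
      linarith
  set p := A.card with hp
  set q := (Aᶜ : Finset (Fin n)).card with hq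
  have hppos : 0 < p := Finset.card_pos.2 hAne
  have hqpos : 0 < q := Finset.card_pos.2 hAcne
  have hpq : p + q = n := by
    rw [hp, hq]
    rw [Finset.card_add_card_compl A, Fintype.card_fin]
  have hpn : p < n := by omega
  have hqn : q < n := by omega
  have hcard2 : ∀ t ∈ U, ((C t)ᶜ : Finset (Fin n)).card = q := by
    intro t ht
    have h1 := Finset.card_add_card_compl (C t)
    rw [hcard t ht] at h1
    have h2 : p + q = Fintype.card (Fin n) := by rw [Fintype.card_fin]; exact hpq
    omega
  have hstable2 : ∀ t ∈ U, ∀ s ∈ U, ∀ π' : Equiv.Perm (Fin n),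
      (∀ i, dist (g t i) (g s (π' i)) < 2*ρ) →
        ∀ i, (i ∈ (C t)ᶜ ↔ π' i ∈ (C s)ᶜ) := by
    intro t ht s hs π' hπ' i
    simp only [Finset.mem_compl]
    rw [hstable t ht s hs π' hπ' i]
  have hqc : QC n g U := hg.mono hUS
  have hqc1 := cluster_qc hρ hqc C p hcard hstable
  have hqc2 := cluster_qc hρ hqc (fun t => (C t)ᶜ) q hcard2 hstable2
  obtain ⟨F1, hF1sel⟩ := IH p hpn U hUconn (gcl g C p) hqc1
  obtain ⟨F2, hF2sel⟩ := IH q hqn U hUconn (gcl g (fun t => (C t)ᶜ) q) hqc2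
  set E : Fin p ⊕ Fin q ≃ Fin n := finSumFinEquiv.trans (finCongr hpq) with hE
  refine ⟨δ0, hδ0, fun k t => Sum.elim (fun j => F1 j t) (fun j => F2 j t) (E.symm k), ?_, ?_⟩
  · intro k
    rcases hk : E.symm k with j | j <;> simp only [hk, Sum.elim_inl, Sum.elim_inr]
    · exact hF1sel.1 j
    · exact hF2sel.1 j
  · intro t ht
    obtain ⟨πa, hπa⟩ := hF1sel.2 t ht
    obtain ⟨πb, hπb⟩ := hF2sel.2 t ht
    set e₁ := (C t).orderIsoOfFin (hcard t ht) with he₁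
    set e₂ := ((C t)ᶜ).orderIsoOfFin (hcard2 t ht) with he₂
    set ψ : Fin p ⊕ Fin q ≃ Fin n :=
      (Equiv.sumCongr e₁.toEquiv
        (e₂.toEquiv.trans (Equiv.subtypeEquivRight (fun x => Finset.mem_compl)))).trans
        (Equiv.sumCompl (fun x => x ∈ C t)) with hψ
    refine ⟨E.symm.trans ((Equiv.sumCongr πa πb).trans ψ), ?_⟩
    funext k
    show Sum.elim (fun j => F1 j t) (fun j => F2 j t) (E.symm k)
      = g t (ψ (Equiv.sumCongr πa πb (E.symm k)))
    rcases hk : E.symm k with j | j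
    · have h1 : F1 j t = gcl g C p t (πa j) := congrFun hπa j
      have h2 : gcl g C p t (πa j) = g t (e₁ (πa j)) := by
        unfold gcl
        rw [dif_pos (hcard t ht)]
      simp only [hk, Sum.elim_inl, Equiv.sumCongr_apply, Sum.map_inl, hψ, Equiv.trans_apply,
        Equiv.sumCompl_apply_inl]
      rw [h1, h2]
      rfl
    · have h1 : F2 j t = gcl g (fun t => (C t)ᶜ) q t (πb j) := congrFun hπb j
      have h2 : gcl g (fun t => (C t)ᶜ) q t (πb j) = g t (e₂ (πb j)) := by
        unfold gcl
        rw [dif_pos (hcard2 t ht)]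
      simp only [hk, Sum.elim_inr, Equiv.sumCongr_apply, Sum.map_inr, hψ, Equiv.trans_apply,
        Equiv.sumCompl_apply_inr]
      rw [h1, h2]
      rfl

end H

section I

lemma main_sel (n : ℕ) : ∀ S : Set ℝ, S.OrdConnected → ∀ g : ℝ → Fin n → ℂ,
    QC n g S → ∃ F, Sel n g F S := by
  induction n using Nat.strong_induction_on with
  | _ n IH =>
  intro S hS g hg
  classical
  set μ : ℝ → ℂ := fun t => (∑ i, g t i) / n with hμdef
  have hμlip : ∀ t s : ℝ, dist (μ t) (μ s) ≤ symDist n (g t) (g s) := by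
    intro t s
    rcases Nat.eq_zero_or_pos n with h0 | hpos
    · subst h0
      have h1 : μ t = 0 := by simp [hμdef]
      have h2 : μ s = 0 := by simp [hμdef]
      rw [h1, h2, dist_self]
      exact symDist_nonneg 0 _ _
    obtain ⟨π, hπ⟩ := symDist_exists_opt n (g t) (g s)
    have he : μ t - μ s = (∑ i, (g t i - g s (π i))) / n := by
      rw [Finset.sum_sub_distrib, Equiv.sum_comp π (fun i => g s i)]
      simp [hμdef, sub_div]
    rw [dist_eq_norm, he, norm_div]
    have hn : ‖(n:ℂ)‖ = (n:ℝ) := by simp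
    rw [hn, div_le_iff₀ (by exact_mod_cast hpos)]
    calc ‖∑ i, (g t i - g s (π i))‖ ≤ ∑ i, ‖g t i - g s (π i)‖ := norm_sum_le _ _
      _ ≤ ∑ _i : Fin n, symDist n (g t) (g s) :=
          Finset.sum_le_sum (fun i _ => by rw [← dist_eq_norm]; exact hπ i)
      _ = symDist n (g t) (g s) * n := by
          rw [Finset.sum_const, Finset.card_univ, Fintype.card_fin, nsmul_eq_mul]
          ring
  set Z : Set ℝ := {t ∈ S | ∀ i, g t i = μ t} with hZdef
  set V : Set ℝ := S \ Z with hVdef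
  have hVS : V ⊆ S := Set.diff_subset
  have hVZ : ∀ t ∈ S, t ∉ V → t ∈ Z := by
    intro t ht htV
    by_contra h
    exact htV ⟨ht, h⟩
  have hZμ : ∀ t ∈ Z, ∀ i, g t i = μ t := fun t ht => ht.2
  have hVne : ∀ t ∈ V, ∃ i j, g t i ≠ g t j := by
    rintro t ⟨htS, htZ⟩
    have hne : ¬ ∀ i, g t i = μ t := fun h => htZ ⟨htS, h⟩
    push_neg at hne
    obtain ⟨i0, hi0⟩ := hne
    by_contra hcon
    push_neg at hcon
    apply hi0
    have hn : 0 < n := Fin.pos i0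
    have hnne : (n:ℂ) ≠ 0 := by exact_mod_cast hn.ne'
    have hsum : (∑ i, g t i) = n * g t i0 := by
      rw [Finset.sum_congr rfl (fun i _ => hcon i i0), Finset.sum_const, Finset.card_univ,
        Fintype.card_fin, nsmul_eq_mul]
    show g t i0 = (∑ i, g t i) / n
    rw [hsum, mul_div_cancel_left₀ _ hnne]
  -- V is relatively open in S
  have hVopen : ∀ t0 ∈ V, ∃ δ > 0, ∀ t ∈ S, |t - t0| < δ → t ∈ V := by
    intro t0 ht0
    obtain ⟨i0, j0, hij⟩ := hVne t0 ht0
    have hi0 : g t0 i0 ≠ μ t0 ∨ g t0 j0 ≠ μ t0 := by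
      by_contra h
      push_neg at h
      exact hij (h.1.trans h.2.symm)
    obtain ⟨i1, hi1⟩ : ∃ i, g t0 i ≠ μ t0 := by
      rcases hi0 with h | h
      · exact ⟨i0, h⟩
      · exact ⟨j0, h⟩
    set ν := dist (g t0 i1) (μ t0) with hν
    have hνpos : 0 < ν := dist_pos.2 hi1
    obtain ⟨δ, hδ, hb⟩ := hg t0 (hVS ht0) (ν/4) (by linarith)
    refine ⟨δ, hδ, fun t ht hlt => ?_⟩
    by_contra htV
    have htZ : t ∈ Z := hVZ t ht htV
    have hsym : symDist n (g t) (g t0) < ν/4 := hb t ht hlt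
    have hsym' : symDist n (g t0) (g t) < ν/4 := by
      rw [symDist_symm]; exact hsym
    obtain ⟨π, hπ⟩ := symDist_exists_opt n (g t0) (g t)
    have h1 : dist (g t0 i1) (g t (π i1)) < ν/4 := lt_of_le_of_lt (hπ i1) hsym'
    have h2 : g t (π i1) = μ t := hZμ t htZ (π i1)
    have h3 : dist (μ t) (μ t0) < ν/4 := lt_of_le_of_lt (hμlip t t0) hsym
    have h4 : ν ≤ dist (g t0 i1) (g t (π i1)) + dist (g t (π i1)) (μ t0) := by
      rw [h2]
      exact dist_triangle _ _ _
    rw [← h2] at h3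
    linarith
  -- components of V
  set Jc : ℝ → Set ℝ := fun t0 => {t | t ∈ V ∧ Set.uIcc t0 t ⊆ V} with hJcdef
  have hJsub : ∀ t0, Jc t0 ⊆ V := fun t0 t ht => ht.1
  have hJself : ∀ t0 ∈ V, t0 ∈ Jc t0 := by
    intro t0 ht0
    exact ⟨ht0, by rw [Set.uIcc_self]; exact Set.singleton_subset_iff.2 ht0⟩
  have hJconn : ∀ t0, (Jc t0).OrdConnected := by
    intro t0
    constructor
    intro x hx y hy z hz
    have hxyV : Set.uIcc x y ⊆ V := by
      intro w hw
      rcases Set.uIcc_subset_uIcc_union_uIcc (b := t0) hw with h | h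
      · rw [Set.uIcc_comm] at h
        exact hx.2 h
      · exact hy.2 h
    have hzuV : z ∈ Set.uIcc x y := Set.Icc_subset_uIcc hz
    refine ⟨hxyV hzuV, ?_⟩
    intro w hw
    rcases Set.uIcc_subset_uIcc_union_uIcc (b := x) hw with h | h
    · exact hx.2 h
    · exact hxyV (Set.uIcc_subset_uIcc Set.left_mem_uIcc hzuV h)
  have hJeq : ∀ t0 t1, t1 ∈ Jc t0 → Jc t1 = Jc t0 := by
    intro t0 t1 ht1
    ext s
    constructor
    · rintro ⟨hsV, hsu⟩
      refine ⟨hsV, fun w hw => ?_⟩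
      rcases Set.uIcc_subset_uIcc_union_uIcc (b := t1) hw with h | h
      · exact ht1.2 h
      · exact hsu h
    · rintro ⟨hsV, hsu⟩
      refine ⟨hsV, fun w hw => ?_⟩
      rcases Set.uIcc_subset_uIcc_union_uIcc (b := t0) hw with h | h
      · rw [Set.uIcc_comm] at h
        exact ht1.2 h
      · exact hsu h
  -- neighborhoods inside components
  have hJnbhd : ∀ t0 ∈ V, ∃ δ > 0, ∀ t ∈ S, |t - t0| < δ → t ∈ Jc t0 := by
    intro t0 ht0
    obtain ⟨δ, hδ, hb⟩ := hVopen t0 ht0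
    refine ⟨δ, hδ, fun t ht hlt => ?_⟩
    have hball : Set.OrdConnected (Metric.ball t0 δ) := by
      rw [Real.ball_eq_Ioo]; exact Set.ordConnected_Ioo
    have hSB : Set.OrdConnected (S ∩ Metric.ball t0 δ) := hS.inter hball
    have htm : t ∈ S ∩ Metric.ball t0 δ := ⟨ht, by rwa [Metric.mem_ball, Real.dist_eq]⟩
    have ht0m : t0 ∈ S ∩ Metric.ball t0 δ := ⟨hVS ht0, Metric.mem_ball_self hδ⟩
    have hsub : Set.uIcc t0 t ⊆ S ∩ Metric.ball t0 δ := hSB.uIcc_subset ht0m htm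
    refine ⟨hb t ht hlt, fun w hw => ?_⟩
    have := hsub hw
    exact hb w this.1 (by have := this.2; rwa [Metric.mem_ball, Real.dist_eq] at this)
  -- selection on each component
  have hJsel : ∀ t0 ∈ V, ∃ F, Sel n g F (Jc t0) := by
    intro t0 ht0
    apply glue_global (hJconn t0)
    intro t1 ht1
    have ht1V : t1 ∈ V := hJsub t0 ht1
    obtain ⟨δloc, hδloc, Floc, hFloc⟩ :=
      local_sel IH hS hg (hVS ht1V) (hVne t1 ht1V)
    obtain ⟨δ2, hδ2, hb2⟩ := hJnbhd t1 ht1V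
    refine ⟨min δloc δ2, lt_min hδloc hδ2, Floc, hFloc.mono ?_⟩
    rintro s ⟨hsJ, hsb⟩
    rw [Metric.mem_ball, Real.dist_eq] at hsb
    refine ⟨hVS (hJsub t0 hsJ), ?_⟩
    rw [Metric.mem_ball, Real.dist_eq]
    exact lt_of_lt_of_le hsb inf_le_left
  set Jsel : Set ℝ → (Fin n → ℝ → ℂ) :=
    fun J => if h : ∃ F, Sel n g F J then h.choose else fun _ _ => 0 with hJseldef
  have hJselspec : ∀ t0 ∈ V, Sel n g (Jsel (Jc t0)) (Jc t0) := by
    intro t0 ht0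
    have h := hJsel t0 ht0
    show Sel n g (if h' : ∃ F, Sel n g F (Jc t0) then h'.choose else fun _ _ => 0) (Jc t0)
    rw [dif_pos h]
    exact h.choose_spec
  set F : Fin n → ℝ → ℂ := fun i t => if t ∈ V then Jsel (Jc t) i t else μ t with hFdef
  have hFV : ∀ i, ∀ t ∈ V, F i t = Jsel (Jc t) i t := by
    intro i t ht
    show (if t ∈ V then Jsel (Jc t) i t else μ t) = _
    rw [if_pos ht]
  have hFZ : ∀ i, ∀ t ∉ V, F i t = μ t := by
    intro i t ht
    show (if t ∈ V then Jsel (Jc t) i t else μ t) = _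
    rw [if_neg ht]
  refine ⟨F, fun i => ?_, fun t ht => ?_⟩
  · -- continuity
    intro t0 ht0
    by_cases ht0V : t0 ∈ V
    · obtain ⟨δ, hδ, hb⟩ := hJnbhd t0 ht0V
      set N := S ∩ Metric.ball t0 δ with hNdef
      have hNJ : N ⊆ Jc t0 := by
        rintro s ⟨hsS, hsb⟩
        rw [Metric.mem_ball, Real.dist_eq] at hsb
        exact hb s hsS hsb
      have heq : ∀ s ∈ N, F i s = Jsel (Jc t0) i s := by
        intro s hs
        have hsJ : s ∈ Jc t0 := hNJ hs
        have hsV : s ∈ V := hJsub t0 hsJ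
        rw [hFV i s hsV, hJeq t0 s hsJ]
      have hmem : N ∈ nhdsWithin t0 S :=
        Filter.inter_mem self_mem_nhdsWithin
          (mem_nhdsWithin_of_mem_nhds (Metric.ball_mem_nhds t0 hδ))
      have ht0N : t0 ∈ N := ⟨ht0, Metric.mem_ball_self hδ⟩
      have hcwa : ContinuousWithinAt (Jsel (Jc t0) i) S t0 :=
        (((hJselspec t0 ht0V).1 i).mono hNJ t0 ht0N).mono_of_mem_nhdsWithin hmem
      exact hcwa.congr_of_eventuallyEq (Filter.eventually_of_mem hmem heq) (heq t0 ht0N)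
    · have ht0Z : t0 ∈ Z := hVZ t0 ht0 ht0V
      rw [Metric.continuousWithinAt_iff]
      intro ε hε
      obtain ⟨δ, hδ, hb⟩ := hg t0 ht0 (ε/2) (by linarith)
      refine ⟨δ, hδ, fun t htS hlt => ?_⟩
      rw [Real.dist_eq] at hlt
      have hsym : symDist n (g t) (g t0) < ε/2 := hb t htS hlt
      have hFt0 : F i t0 = μ t0 := hFZ i t0 ht0V
      rw [hFt0]
      by_cases htV : t ∈ V
      · have htJ : t ∈ Jc t := hJself t htV
        obtain ⟨π, hπ⟩ := (hJselspec t htV).2 t htJ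
        have h1 : F i t = g t (π i) := by
          rw [hFV i t htV]
          exact congrFun hπ i
        rw [h1]
        obtain ⟨σ, hσ⟩ := symDist_exists_opt n (g t) (g t0)
        have h2 : g t0 (σ (π i)) = μ t0 := hZμ t0 ht0Z _
        have h3 : dist (g t (π i)) (μ t0) ≤ symDist n (g t) (g t0) := by
          rw [← h2]
          exact hσ (π i)
        linarith
      · have h1 : F i t = μ t := hFZ i t htV
        rw [h1]
        have := hμlip t t0
        linarith
  · -- the relation
    by_cases htV : t ∈ V
    · have htJ : t ∈ Jc t := hJself t htV
      obtain ⟨π, hπ⟩ := (hJselspec t htV).2 t htJ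
      refine ⟨π, ?_⟩
      funext i
      rw [hFV i t htV]
      exact congrFun hπ i
    · have htZ : t ∈ Z := hVZ t ht htV
      refine ⟨1, ?_⟩
      funext i
      rw [hFZ i t htV]
      show μ t = g t _
      rw [hZμ t htZ]

end I

end Kato


/-- Kato's selection theorem: a continuous map from an interval `I ⊆ ℝ` into the
metric space `C^n_sym` of unordered `n`-tuples of complex numbers can be represented
by `n` continuous functions. -/
theorem kato_selection (n : ℕ) (m : MetricSpace (Quotient (permSetoid n)))
    (hm : ∀ a b : Fin n → ℂ,
      m.dist (Quotient.mk (permSetoid n) a) (Quotient.mk (permSetoid n) b) = symDist n a b)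
    (I : Set ℝ) (hI : I.OrdConnected)
    (lam : I → Quotient (permSetoid n))
    (hcont : @Continuous _ _ _ m.toUniformSpace.toTopologicalSpace lam) :
    ∃ f : Fin n → I → ℂ, (∀ i, Continuous (f i)) ∧
      ∀ t : I, lam t = Quotient.mk (permSetoid n) (fun i => f i t) := by
  classical
  set g : ℝ → Fin n → ℂ := fun t => if h : t ∈ I then (lam ⟨t, h⟩).out else 0 with hgdef
  have hgI : ∀ (t : ℝ) (h : t ∈ I), Quotient.mk (permSetoid n) (g t) = lam ⟨t, h⟩ := by
    intro t h
    show Quotient.mk _ (if h' : t ∈ I then (lam ⟨t, h'⟩).out else 0) = _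
    rw [dif_pos h]
    exact Quotient.out_eq _
  have hQC : Kato.QC n g I := by
    intro t₀ ht₀ ε hε
    have h2 := (@Metric.continuous_iff _ _ _ m.toPseudoMetricSpace lam).1 hcont
    obtain ⟨δ, hδ, hb⟩ := h2 ⟨t₀, ht₀⟩ ε hε
    refine ⟨δ, hδ, fun t ht hlt => ?_⟩
    have hd : dist (⟨t, ht⟩ : I) (⟨t₀, ht₀⟩ : I) < δ := by
      rw [Subtype.dist_eq, Real.dist_eq]
      exact hlt
    have h3 := hb ⟨t, ht⟩ hd
    rw [← hgI t ht, ← hgI t₀ ht₀] at h3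
    have h4 : dist (Quotient.mk (permSetoid n) (g t)) (Quotient.mk (permSetoid n) (g t₀))
        = m.dist (Quotient.mk (permSetoid n) (g t)) (Quotient.mk (permSetoid n) (g t₀)) := rfl
    rw [h4, hm] at h3
    exact h3
  obtain ⟨F, hFsel⟩ := Kato.main_sel n I hI g hQC
  refine ⟨fun i => I.restrict (F i), fun i => (hFsel.1 i).restrict, fun t => ?_⟩
  obtain ⟨π, hπ⟩ := hFsel.2 t t.2
  have h1 : lam t = Quotient.mk (permSetoid n) (g t) := by
    rw [hgI ↑t t.2]
  rw [h1]
  apply Eq.symm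
  apply Quotient.sound
  exact ⟨π, hπ⟩
end

section
/- For any finite symmetric norm Φ on ℝ^n and any ξ, η ∈ ℝ_+^n, Φ(|ξ^↓_1 − η^↓_1|, ..., |ξ^↓_n − η^↓_n|) ≤ Φ(|ξ_1 − η_1|, ..., |ξ_n − η_n|), where ξ^↓ denotes the nonincreasing rearrangement of ξ. -/
/-- A finite symmetric norm on `ℝ^n`: a norm normalised by `Φ(1,0,…,0) = 1`
and invariant under permutations of coordinates and under replacing coordinates
by their absolute values. -/
structure FiniteSymmetricNorm (n : ℕ) where
  toFun : (Fin n → ℝ) → ℝ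
  nonneg : ∀ ξ, 0 ≤ toFun ξ
  eq_zero : ∀ ξ, toFun ξ = 0 → ξ = 0
  add_le : ∀ ξ η, toFun (ξ + η) ≤ toFun ξ + toFun η
  smul_eq : ∀ (c : ℝ) (ξ), toFun (c • ξ) = |c| * toFun ξ
  norm_single : ∀ h : 0 < n, toFun (fun i => if i = ⟨0, h⟩ then 1 else 0) = 1
  perm_invariant : ∀ (π : Equiv.Perm (Fin n)) (ξ), toFun (ξ ∘ π) = toFun ξ
  abs_invariant : ∀ ξ, toFun (fun i => |ξ i|) = toFun ξ

/-- The nonincreasing rearrangement of a finite tuple of reals. -/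
noncomputable def decSort {n : ℕ} (ξ : Fin n → ℝ) : Fin n → ℝ :=
  fun i => ξ (Tuple.sort ξ i.rev)


open Finset

namespace FSNAux

noncomputable def decSort' {n : ℕ} (ξ : Fin n → ℝ) : Fin n → ℝ := decSort ξ


variable {n : ℕ}

/-- the permutation such that `decSort' w = w ∘ dperm w`. -/
noncomputable def dperm (w : Fin n → ℝ) : Equiv.Perm (Fin n) :=
  Fin.revPerm.trans (Tuple.sort w)

lemma decSort'_eq_comp (w : Fin n → ℝ) : decSort' w = w ∘ (dperm w) := rfl

lemma decSort'_apply (w : Fin n → ℝ) (i : Fin n) : decSort' w i = w (dperm w i) := rfl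

lemma antitone_decSort' (w : Fin n → ℝ) : Antitone (decSort' w) := by
  intro i j hij
  have h := Tuple.monotone_sort w (a := j.rev) (b := i.rev) (by rwa [Fin.rev_le_rev])
  exact h

lemma sum_decSort' (w : Fin n → ℝ) : ∑ i, decSort' w i = ∑ i, w i :=
  Equiv.sum_comp (dperm w) w

lemma sum_comp_decSort' (f : ℝ → ℝ) (w : Fin n → ℝ) :
    ∑ i, f (decSort' w i) = ∑ i, f (w i) :=
  Equiv.sum_comp (dperm w) (fun j => f (w j))

lemma card_le_decSort' (w : Fin n → ℝ) (a : ℝ) :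
    Fintype.card {i // a ≤ decSort' w i} = Fintype.card {j // a ≤ w j} :=
  Fintype.card_congr (Equiv.subtypeEquiv (dperm w) (fun _ => Iff.rfl))

lemma le_decSort'_iff (w : Fin n → ℝ) (a : ℝ) (j : Fin n) :
    a ≤ decSort' w j ↔ (j : ℕ) < Fintype.card {i // a ≤ w i} := by
  rw [← card_le_decSort']
  rw [Fintype.card_subtype]
  exact (Tuple.lt_card_ge_iff_apply_ge_of_antitone (f := decSort' w) (a := a) (j := j) (antitone_decSort' w)).symm

/-- monotonicity of the decreasing rearrangement, with a shift. -/
lemma decSort'_shift_le (u v : Fin n → ℝ) (s : ℝ) (h : ∀ j, u j + s ≤ v j) (i : Fin n) :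
    decSort' u i + s ≤ decSort' v i := by
  have h1 : (i : ℕ) < Fintype.card {j // decSort' u i ≤ u j} :=
    (le_decSort'_iff u _ i).1 le_rfl
  have h2 : Fintype.card {j // decSort' u i ≤ u j}
      ≤ Fintype.card {j // decSort' u i + s ≤ v j} :=
    Fintype.card_subtype_mono _ _ (fun j hj => by have h2 := h j; exact by linarith [hj, h2])
  exact (le_decSort'_iff v _ i).2 (lt_of_lt_of_le h1 h2)

lemma decSort'_mono (u v : Fin n → ℝ) (h : ∀ j, u j ≤ v j) (i : Fin n) :
    decSort' u i ≤ decSort' v i := by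
  have := decSort'_shift_le u v 0 (fun j => by simpa using h j) i
  simpa using this



variable {n : ℕ}

lemma max_sub_zero (a b : ℝ) : max (a - b) 0 = max a b - b := by
  rcases le_total a b with h | h
  · rw [max_eq_right (by linarith : a - b ≤ (0:ℝ)), max_eq_right h]; ring
  · rw [max_eq_left (by linarith : (0:ℝ) ≤ a - b), max_eq_left h]

/-- positive parts of differences of decreasing rearrangements. -/
lemma sum_posPart_le (x y : Fin n → ℝ) (t : ℝ) :
    ∑ i, max (decSort' x i - decSort' y i - t) 0 ≤ ∑ j, max (x j - y j - t) 0 := by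
  set m : Fin n → ℝ := fun j => max (x j) (y j + t) with hm
  have hstep : ∀ i, max (decSort' x i - decSort' y i - t) 0
      ≤ decSort' m i - (decSort' y i + t) := by
    intro i
    have h1 : decSort' x i ≤ decSort' m i :=
      decSort'_mono x m (fun j => le_max_left _ _) i
    have h2 : decSort' y i + t ≤ decSort' m i :=
      decSort'_shift_le y m t (fun j => le_max_right _ _) i
    exact max_le (by linarith) (by linarith)
  calc ∑ i, max (decSort' x i - decSort' y i - t) 0
      ≤ ∑ i, (decSort' m i - (decSort' y i + t)) := Finset.sum_le_sum (fun i _ => hstep i)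
    _ = ∑ i, decSort' m i - ∑ i, (decSort' y i + t) := by rw [Finset.sum_sub_distrib]
    _ = ∑ i, m i - ∑ i, (y i + t) := by
        rw [sum_decSort']
        congr 1
        rw [Finset.sum_add_distrib, Finset.sum_add_distrib, sum_decSort']
    _ = ∑ j, (m j - (y j + t)) := by rw [Finset.sum_sub_distrib]
    _ = ∑ j, max (x j - y j - t) 0 := by
        refine Finset.sum_congr rfl (fun j _ => ?_)
        rw [hm]
        have : x j - y j - t = x j - (y j + t) := by ring
        rw [this, max_sub_zero]

lemma abs_posPart (a t : ℝ) (ht : 0 ≤ t) :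
    max (|a| - t) 0 = max (a - t) 0 + max (-a - t) 0 := by
  rcases le_total 0 a with h | h
  · rw [abs_of_nonneg h, max_eq_right (by linarith : -a - t ≤ (0:ℝ)), add_zero]
  · rw [abs_of_nonpos h, max_eq_right (by linarith : a - t ≤ (0:ℝ)), zero_add]

lemma card_filter_lt (k : ℕ) (hk : k ≤ n) :
    (univ.filter (fun i : Fin n => (i : ℕ) < k)).card = k := by
  have he : (univ.filter (fun i : Fin n => (i : ℕ) < k))
      = (Finset.range k).attachFin (fun m hm => lt_of_lt_of_le (Finset.mem_range.1 hm) hk) := by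
    ext i
    simp [Finset.mem_attachFin]
  rw [he, Finset.card_attachFin, Finset.card_range]

/-- The key weak-majorisation inequality. -/
lemma weak_major (x y : Fin n → ℝ) (I : Finset (Fin n)) :
    ∑ i ∈ I, |decSort' x i - decSort' y i|
      ≤ ∑ i ∈ univ.filter (fun i : Fin n => (i : ℕ) < I.card),
          decSort' (fun j => |x j - y j|) i := by
  set v : Fin n → ℝ := fun j => |x j - y j| with hv
  set k := I.card with hkdef
  have hk : k ≤ n := by
    have := Finset.card_le_card (Finset.subset_univ I)
    simpa using this
  rcases Nat.eq_zero_or_pos k with hk0 | hkpos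
  · have hI : I = ∅ := Finset.card_eq_zero.1 hk0
    have hF : (univ.filter (fun i : Fin n => (i : ℕ) < k)) = ∅ := by
      rw [hk0]; simp
    rw [hI, hF]; simp
  · set K : Fin n := ⟨k - 1, by omega⟩ with hK
    set t := decSort' v K with ht'
    have ht : 0 ≤ t := by
      rw [ht', decSort'_apply]; exact abs_nonneg _
    have step1 : ∑ i ∈ I, |decSort' x i - decSort' y i|
        ≤ (k : ℝ) * t + ∑ i, max (|decSort' x i - decSort' y i| - t) 0 := by
      have hpt : ∀ i, |decSort' x i - decSort' y i|
          ≤ t + max (|decSort' x i - decSort' y i| - t) 0 := by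
        intro i
        have := le_max_left (|decSort' x i - decSort' y i| - t) 0
        linarith
      calc ∑ i ∈ I, |decSort' x i - decSort' y i|
          ≤ ∑ i ∈ I, (t + max (|decSort' x i - decSort' y i| - t) 0) :=
            Finset.sum_le_sum (fun i _ => hpt i)
        _ = (k : ℝ) * t + ∑ i ∈ I, max (|decSort' x i - decSort' y i| - t) 0 := by
            rw [Finset.sum_add_distrib, Finset.sum_const, ← hkdef, nsmul_eq_mul]
        _ ≤ (k : ℝ) * t + ∑ i, max (|decSort' x i - decSort' y i| - t) 0 := by
            refine add_le_add (le_refl _) ?_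
            exact Finset.sum_le_sum_of_subset_of_nonneg (Finset.subset_univ I)
              (fun i _ _ => le_max_right _ _)
    have step2 : ∑ i, max (|decSort' x i - decSort' y i| - t) 0
        ≤ ∑ j, max (v j - t) 0 := by
      have hsplit : ∀ i, max (|decSort' x i - decSort' y i| - t) 0
          = max (decSort' x i - decSort' y i - t) 0
            + max (decSort' y i - decSort' x i - t) 0 := by
        intro i
        have := abs_posPart (decSort' x i - decSort' y i) t ht
        rw [this]; ring_nf
      calc ∑ i, max (|decSort' x i - decSort' y i| - t) 0
          = ∑ i, max (decSort' x i - decSort' y i - t) 0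
            + ∑ i, max (decSort' y i - decSort' x i - t) 0 := by
            rw [← Finset.sum_add_distrib]
            exact Finset.sum_congr rfl (fun i _ => hsplit i)
        _ ≤ ∑ j, max (x j - y j - t) 0 + ∑ j, max (y j - x j - t) 0 :=
            add_le_add (sum_posPart_le x y t) (sum_posPart_le y x t)
        _ = ∑ j, max (v j - t) 0 := by
            rw [← Finset.sum_add_distrib]
            refine Finset.sum_congr rfl (fun j _ => ?_)
            have hvj : v j = |x j - y j| := rfl
            rw [hvj, abs_posPart (x j - y j) t ht]; ring_nf
    have step3 : ∑ j, max (v j - t) 0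
        = ∑ i ∈ univ.filter (fun i : Fin n => (i : ℕ) < k), (decSort' v i - t) := by
      have h1 : ∑ j, max (v j - t) 0 = ∑ j, max (decSort' v j - t) 0 :=
        (sum_comp_decSort' (fun a => max (a - t) 0) v).symm
      rw [h1]
      rw [← Finset.sum_filter_add_sum_filter_not univ (fun i : Fin n => (i : ℕ) < k)
        (fun i => max (decSort' v i - t) 0)]
      have h2 : ∑ i ∈ univ.filter (fun i : Fin n => ¬ (i : ℕ) < k),
          max (decSort' v i - t) 0 = 0 := by
        refine Finset.sum_eq_zero (fun i hi => ?_)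
        simp only [mem_filter, mem_univ, true_and, not_lt] at hi
        have hKi : K ≤ i := by
          apply Fin.le_def.2
          rw [hK]
          simp only []
          omega
        have : decSort' v i ≤ t := by
          rw [ht']; exact antitone_decSort' v hKi
        exact max_eq_right (by linarith)
      rw [h2, add_zero]
      refine Finset.sum_congr rfl (fun i hi => ?_)
      simp only [mem_filter, mem_univ, true_and] at hi
      have hiK : i ≤ K := by
        apply Fin.le_def.2
        rw [hK]
        simp only []
        omega
      have : t ≤ decSort' v i := by
        rw [ht']; exact antitone_decSort' v hiK
      exact max_eq_left (by linarith)
    have step4 : ∑ i ∈ univ.filter (fun i : Fin n => (i : ℕ) < k), (decSort' v i - t)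
        = ∑ i ∈ univ.filter (fun i : Fin n => (i : ℕ) < k), decSort' v i - (k : ℝ) * t := by
      rw [Finset.sum_sub_distrib, Finset.sum_const, card_filter_lt k hk, nsmul_eq_mul]
    calc ∑ i ∈ I, |decSort' x i - decSort' y i|
        ≤ (k : ℝ) * t + ∑ i, max (|decSort' x i - decSort' y i| - t) 0 := step1
      _ ≤ (k : ℝ) * t + ∑ j, max (v j - t) 0 := by linarith [step2]
      _ = (k : ℝ) * t + (∑ i ∈ univ.filter (fun i : Fin n => (i : ℕ) < k), decSort' v i
            - (k : ℝ) * t) := by rw [step3, step4]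
      _ = ∑ i ∈ univ.filter (fun i : Fin n => (i : ℕ) < k), decSort' v i := by ring




/-- Abel summation positivity: if `b` is antitone and nonnegative and all prefix sums
of `d` are nonnegative, then `∑ b i * d i ≥ 0`. -/
lemma abel_nonneg (b d : Fin n → ℝ) (hb : Antitone b) (hb0 : ∀ i, 0 ≤ b i)
    (hd : ∀ k : ℕ, 0 ≤ ∑ i ∈ univ.filter (fun i : Fin n => (i : ℕ) < k), d i) :
    0 ≤ ∑ i, b i * d i := by
  classical
  set b' : ℕ → ℝ := fun m => if h : m < n then b ⟨m, h⟩ else 0 with hb'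
  set d' : ℕ → ℝ := fun m => if h : m < n then d ⟨m, h⟩ else 0 with hd'
  have hglue : ∀ k : ℕ, ∑ j ∈ Finset.range k, d' j
      = ∑ i ∈ univ.filter (fun i : Fin n => (i : ℕ) < k), d i := by
    intro k
    induction k with
    | zero => simp
    | succ k ih =>
      rw [Finset.sum_range_succ, ih]
      by_cases hk : k < n
      · have hins : (univ.filter (fun i : Fin n => (i : ℕ) < k + 1))
            = insert (⟨k, hk⟩ : Fin n) (univ.filter (fun i : Fin n => (i : ℕ) < k)) := by
          ext i
          simp only [mem_filter, mem_univ, true_and, Finset.mem_insert]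
          constructor
          · intro h
            rcases Nat.lt_succ_iff_lt_or_eq.1 h with h | h
            · exact Or.inr h
            · exact Or.inl (Fin.ext h)
          · rintro (rfl | h)
            · simp
            · omega
        rw [hins, Finset.sum_insert (by simp)]
        have : d' k = d ⟨k, hk⟩ := dif_pos hk
        rw [this]; ring
      · have heq : (univ.filter (fun i : Fin n => (i : ℕ) < k + 1))
            = (univ.filter (fun i : Fin n => (i : ℕ) < k)) := by
          ext i
          simp only [mem_filter, mem_univ, true_and]
          have := i.isLt
          omega
        have : d' k = 0 := dif_neg hk
        rw [heq, this, add_zero]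
  have hfin : ∑ i, b i * d i = ∑ j ∈ Finset.range n, b' j * d' j := by
    rw [Finset.sum_range fun j => b' j * d' j]
    refine Finset.sum_congr rfl (fun i _ => ?_)
    have h1 : b' (i : ℕ) = b i := by simp [hb']
    have h2 : d' (i : ℕ) = d i := by simp [hd']
    rw [h1, h2]
  have hby : ∑ j ∈ Finset.range n, b' j • d' j
      = b' (n - 1) • (∑ j ∈ Finset.range n, d' j)
        - ∑ j ∈ Finset.range (n - 1), (b' (j + 1) - b' j) • (∑ l ∈ Finset.range (j + 1), d' l) :=
    Finset.sum_range_by_parts b' d' n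
  have hb'0 : ∀ m, 0 ≤ b' m := by
    intro m
    by_cases h : m < n
    · simp only [hb', dif_pos h]; exact hb0 _
    · simp only [hb', dif_neg h]; exact le_rfl
  have hb'anti : ∀ m, b' (m + 1) ≤ b' m := by
    intro m
    by_cases h1 : m + 1 < n
    · have h2 : m < n := by omega
      have : b' (m + 1) = b ⟨m + 1, h1⟩ := dif_pos h1
      rw [this]
      have : b' m = b ⟨m, h2⟩ := dif_pos h2
      rw [this]
      exact hb (by simp [Fin.le_def])
    · have : b' (m + 1) = 0 := dif_neg h1
      rw [this]; exact hb'0 m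
  have hpos1 : 0 ≤ b' (n - 1) • (∑ j ∈ Finset.range n, d' j) := by
    rw [smul_eq_mul]
    exact mul_nonneg (hb'0 _) (by rw [hglue]; exact hd n)
  have hpos2 : ∑ j ∈ Finset.range (n - 1), (b' (j + 1) - b' j) • (∑ l ∈ Finset.range (j + 1), d' l)
      ≤ 0 := by
    refine Finset.sum_nonpos (fun j _ => ?_)
    rw [smul_eq_mul]
    apply mul_nonpos_of_nonpos_of_nonneg
    · linarith [hb'anti j]
    · rw [hglue]; exact hd (j + 1)
  have : ∑ j ∈ Finset.range n, b' j * d' j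
      = ∑ j ∈ Finset.range n, b' j • d' j := by simp [smul_eq_mul]
  rw [hfin, this, hby]
  linarith




variable {n : ℕ}

lemma phi_zero (Φ : FiniteSymmetricNorm n) : Φ.toFun 0 = 0 := by
  have h := Φ.smul_eq 0 0
  rw [zero_smul] at h
  simpa using h

/-- A finite symmetric norm is monotone with respect to weak majorisation
(for an antitone nonnegative dominated vector). -/
lemma norm_mono_of_major (Φ : FiniteSymmetricNorm n) (u v : Fin n → ℝ)
    (hu_anti : Antitone u) (hu0 : ∀ i, 0 ≤ u i) (hv0 : ∀ i, 0 ≤ v i)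
    (hmaj : ∀ k : ℕ, ∑ i ∈ univ.filter (fun i : Fin n => (i : ℕ) < k), u i
      ≤ ∑ i ∈ univ.filter (fun i : Fin n => (i : ℕ) < k), v i) :
    Φ.toFun u ≤ Φ.toFun v := by
  classical
  by_cases hu : u = 0
  · rw [hu, phi_zero]
    exact Φ.nonneg v
  -- Hahn–Banach: a linear functional `g` with `g u = Φ u` and `g ≤ Φ`.
  have N_hom : ∀ c : ℝ, 0 < c → ∀ x : Fin n → ℝ, Φ.toFun (c • x) = c * Φ.toFun x := by
    intro c hc x
    rw [Φ.smul_eq, abs_of_pos hc]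
  have hf : ∀ x : (LinearPMap.mkSpanSingleton (K := ℝ) (L := ℝ) (σ := RingHom.id ℝ) u (Φ.toFun u) hu).domain,
      (LinearPMap.mkSpanSingleton (K := ℝ) (L := ℝ) (σ := RingHom.id ℝ) u (Φ.toFun u) hu) x ≤ Φ.toFun x := by
    rintro ⟨x, hx⟩
    rcases Submodule.mem_span_singleton.1 hx with ⟨c, rfl⟩
    rw [LinearPMap.mkSpanSingleton'_apply, smul_eq_mul]
    have h1 : Φ.toFun ((⟨c • u, hx⟩ : (LinearPMap.mkSpanSingleton
        (K := ℝ) (L := ℝ) (σ := RingHom.id ℝ) u (Φ.toFun u) hu).domain) : Fin n → ℝ) = |c| * Φ.toFun u := Φ.smul_eq c u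
    rw [h1]
    exact mul_le_mul_of_nonneg_right (le_abs_self c) (Φ.nonneg u)
  obtain ⟨g, hgf, hgle⟩ := exists_extension_of_le_sublinear
    (LinearPMap.mkSpanSingleton (K := ℝ) (L := ℝ) (σ := RingHom.id ℝ) u (Φ.toFun u) hu) Φ.toFun N_hom Φ.add_le hf
  have hgu : g u = Φ.toFun u := by
    have h1 := hgf ⟨u, Submodule.mem_span_singleton_self u⟩
    rwa [LinearPMap.mkSpanSingleton_apply] at h1
  -- the representing vector of `g`
  set w : Fin n → ℝ := fun j => g (fun i : Fin n => if j = i then (1:ℝ) else 0) with hwdef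
  have hrep : ∀ z : Fin n → ℝ, g z = ∑ j, z j * w j := by
    intro z
    conv_lhs => rw [pi_eq_sum_univ z]
    rw [map_sum]
    refine Finset.sum_congr rfl (fun j _ => ?_)
    rw [map_smul, smul_eq_mul]
  set π : Equiv.Perm (Fin n) := dperm (fun j => |w j|) with hπ
  set b : Fin n → ℝ := decSort' (fun j => |w j|) with hbdef
  have hb_apply : ∀ i, b i = |w (π i)| := fun i => rfl
  have hb_anti : Antitone b := antitone_decSort' _
  have hb0 : ∀ i, 0 ≤ b i := fun i => by rw [hb_apply]; exact abs_nonneg _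
  have hbinv : ∀ j, b (π⁻¹ j) = |w j| := by
    intro j
    rw [hb_apply]
    congr 1
    exact congrArg w (Equiv.apply_symm_apply π j)
  -- step 1: Φ u = g u = ∑ u * w ≤ ∑ u * |w|
  have s1 : Φ.toFun u ≤ ∑ j, u j * |w j| := by
    rw [← hgu, hrep u]
    exact Finset.sum_le_sum (fun j _ =>
      mul_le_mul_of_nonneg_left (le_abs_self _) (hu0 j))
  -- step 2: rearrangement
  have hmono : Monovary b u := by
    intro i j hij
    have hji : j ≤ i := by
      by_contra hc
      push_neg at hc
      have := hu_anti hc.le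
      linarith
    exact hb_anti hji
  have s2 : ∑ j, u j * |w j| ≤ ∑ j, b j * u j := by
    have h1 : ∑ j, u j * |w j| = ∑ j, b (π⁻¹ j) * u j := by
      refine Finset.sum_congr rfl (fun j _ => ?_)
      rw [hbinv, mul_comm]
    rw [h1]
    exact hmono.sum_comp_perm_mul_le_sum_mul (σ := π⁻¹)
  -- step 3: Abel summation
  have s3 : ∑ j, b j * u j ≤ ∑ j, b j * v j := by
    have h1 := abel_nonneg b (fun i => v i - u i) hb_anti hb0 (fun k => by
      rw [Finset.sum_sub_distrib]
      have := hmaj k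
      linarith)
    have h2 : ∑ i, b i * (v i - u i) = ∑ i, b i * v i - ∑ i, b i * u i := by
      rw [← Finset.sum_sub_distrib]
      exact Finset.sum_congr rfl (fun i _ => by ring)
    rw [h2] at h1
    linarith
  -- step 4: ∑ b * v = g z for a sign-flipped permuted copy z of v
  set z : Fin n → ℝ := fun j => (if 0 ≤ w j then (1:ℝ) else -1) * v (π⁻¹ j) with hzdef
  have s4 : ∑ j, b j * v j = g z := by
    rw [hrep z]
    have h1 : ∀ j, z j * w j = |w j| * v (π⁻¹ j) := by
      intro j
      by_cases h : 0 ≤ w j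
      · rw [hzdef]
        simp only [if_pos h, abs_of_nonneg h]
        ring
      · rw [hzdef]
        simp only [if_neg h, abs_of_neg (lt_of_not_ge h)]
        ring
    have h2 : ∑ j, z j * w j = ∑ j, |w j| * v (π⁻¹ j) :=
      Finset.sum_congr rfl (fun j _ => h1 j)
    rw [h2]
    have h3 := Equiv.sum_comp π (fun j => |w j| * v (π⁻¹ j))
    rw [← h3]
    refine Finset.sum_congr rfl (fun i _ => ?_)
    rw [show π⁻¹ (π i) = i from Equiv.symm_apply_apply π i, ← hb_apply, mul_comm]
  -- step 5: g z ≤ Φ z = Φ v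
  have s5 : g z ≤ Φ.toFun v := by
    have h1 : Φ.toFun z = Φ.toFun v := by
      have habs : (fun j => |z j|) = v ∘ ⇑(π⁻¹ : Equiv.Perm (Fin n)) := by
        funext j
        rw [hzdef]
        simp only [Function.comp_apply, abs_mul]
        by_cases h : 0 ≤ w j
        · rw [if_pos h, abs_one, one_mul, abs_of_nonneg (hv0 _)]
        · rw [if_neg h]
          simp [abs_of_nonneg (hv0 _)]
      calc Φ.toFun z = Φ.toFun (fun j => |z j|) := (Φ.abs_invariant z).symm
        _ = Φ.toFun (v ∘ ⇑(π⁻¹ : Equiv.Perm (Fin n))) := by rw [habs]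
        _ = Φ.toFun v := Φ.perm_invariant π⁻¹ v
    rw [← h1]
    exact hgle z
  linarith



end FSNAux

open FSNAux in
/-- For any finite symmetric norm `Φ` on `ℝ^n` and nonnegative tuples `ξ, η`,
`Φ(|ξ^↓ - η^↓|) ≤ Φ(|ξ - η|)`. -/
theorem finiteSymmetricNorm_decSort_sub (n : ℕ) (Φ : FiniteSymmetricNorm n)
    (ξ η : Fin n → ℝ) (hξ : ∀ i, 0 ≤ ξ i) (hη : ∀ i, 0 ≤ η i) :
    Φ.toFun (fun i => |decSort ξ i - decSort η i|) ≤ Φ.toFun (fun i => |ξ i - η i|) := by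
  classical
  set u0 : Fin n → ℝ := fun i => |decSort' ξ i - decSort' η i| with hu0def
  set v0 : Fin n → ℝ := fun j => |ξ j - η j| with hv0def
  show Φ.toFun u0 ≤ Φ.toFun v0
  have h1 : Φ.toFun u0 = Φ.toFun (decSort' u0) := by
    rw [decSort'_eq_comp]
    exact (Φ.perm_invariant (dperm u0) u0).symm
  have h2 : Φ.toFun v0 = Φ.toFun (decSort' v0) := by
    rw [decSort'_eq_comp]
    exact (Φ.perm_invariant (dperm v0) v0).symm
  rw [h1, h2]
  refine norm_mono_of_major Φ (decSort' u0) (decSort' v0)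
    (antitone_decSort' u0)
    (fun i => by rw [decSort'_apply]; exact abs_nonneg _)
    (fun i => by rw [decSort'_apply]; exact abs_nonneg _)
    (fun k => ?_)
  -- weak majorisation of the sorted vectors
  have hmin : ∀ i : Fin n, ((i : ℕ) < k ↔ (i : ℕ) < min k n) := by
    intro i
    have := i.isLt
    omega
  have hfilter : (univ.filter (fun i : Fin n => (i : ℕ) < k))
      = (univ.filter (fun i : Fin n => (i : ℕ) < min k n)) :=
    Finset.filter_congr (fun i _ => by rw [hmin i])
  rw [hfilter]
  set k' := min k n with hk'def
  have hk' : k' ≤ n := min_le_right _ _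
  set F := univ.filter (fun i : Fin n => (i : ℕ) < k') with hFdef
  set I := F.image (dperm u0) with hIdef
  have hcard : I.card = k' := by
    rw [hIdef, Finset.card_image_of_injective _ (dperm u0).injective, hFdef,
      card_filter_lt k' hk']
  have hL : ∑ i ∈ F, decSort' u0 i = ∑ j ∈ I, u0 j := by
    rw [hIdef, Finset.sum_image (fun x _ y _ h => (dperm u0).injective h)]
    rfl
  have := weak_major ξ η I
  rw [hcard] at this
  calc ∑ i ∈ F, decSort' u0 i = ∑ j ∈ I, u0 j := hL
    _ = ∑ j ∈ I, |decSort' ξ j - decSort' η j| := rfl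
    _ ≤ ∑ i ∈ univ.filter (fun i : Fin n => (i : ℕ) < k'), decSort' (fun j => |ξ j - η j|) i :=
        this
    _ = ∑ i ∈ F, decSort' v0 i := rfl
end

section
/- Let Φ be a regular symmetric norm and ξ ∈ ℓ_Φ^+. For each n let ξ^(n) := (ξ_1,...,ξ_n,0,0,...). Then the nonincreasing rearrangements (ξ^(n))^↓ converge to ξ^↓ in the norm Φ as n → ∞. -/
open Filter

/-- A symmetric norm: a norm on the space `c_00` of finitely supported real
sequences (modelled as `ℕ →₀ ℝ`), normalised by `Φ(1,0,0,…) = 1`, and invariant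
under permutations of the entries and under replacing entries by their absolute
values. -/
structure SymmetricNorm where
  toFun : (ℕ →₀ ℝ) → ℝ
  nonneg : ∀ ξ, 0 ≤ toFun ξ
  eq_zero : ∀ ξ, toFun ξ = 0 → ξ = 0
  add_le : ∀ ξ η, toFun (ξ + η) ≤ toFun ξ + toFun η
  smul_eq : ∀ (c : ℝ) (ξ), toFun (c • ξ) = |c| * toFun ξ
  norm_single : toFun (Finsupp.single 0 1) = 1
  perm_invariant : ∀ (π : Equiv.Perm ℕ) (ξ), toFun (Finsupp.equivMapDomain π ξ) = toFun ξ
  abs_invariant : ∀ (ξ : ℕ →₀ ℝ), toFun (Finsupp.mapRange (fun a => |a|) abs_zero ξ) = toFun ξ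

/-- The truncation `(ξ_0, …, ξ_{n-1}, 0, 0, …)` of a sequence, as an element of `c_00`. -/
noncomputable def truncF (ξ : ℕ → ℝ) (n : ℕ) : ℕ →₀ ℝ :=
  ∑ i ∈ Finset.range n, Finsupp.single i (ξ i)

/-- The extension of a symmetric norm to sequences: `Φ(ξ) = lim_n Φ(ξ_0,…,ξ_{n-1},0,0,…)`. -/
noncomputable def SymmetricNorm.ext (Φ : SymmetricNorm) (ξ : ℕ → ℝ) : ℝ :=
  limUnder atTop fun n => Φ.toFun (truncF ξ n)

/-- Membership in the natural domain `ℓ_Φ`: the sequence tends to `0` and the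
`Φ`-norms of its truncations converge. -/
def MemLPhi (Φ : SymmetricNorm) (ξ : ℕ → ℝ) : Prop :=
  Tendsto ξ atTop (nhds 0) ∧ ∃ L, Tendsto (fun n => Φ.toFun (truncF ξ n)) atTop (nhds L)

/-- Membership in `ℓ_Φ^+`: nonnegative `Φ`-summable sequences. -/
def MemLPhiPlus (Φ : SymmetricNorm) (ξ : ℕ → ℝ) : Prop :=
  (∀ i, 0 ≤ ξ i) ∧ MemLPhi Φ ξ

/-- A symmetric norm is regular if `Φ(ξ_{n+1}, ξ_{n+2}, …) → 0` for every `ξ ∈ ℓ_Φ`. -/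
def SymmetricNorm.Regular (Φ : SymmetricNorm) : Prop :=
  ∀ ξ : ℕ → ℝ, MemLPhi Φ ξ →
    Tendsto (fun n => Φ.ext fun i => ξ (n + i)) atTop (nhds 0)

/-- `partialMax ξ k` is the supremum of sums of `k` distinct entries of `ξ`;
for nonnegative `ξ ∈ c_0` this equals `ξ^↓_1 + ⋯ + ξ^↓_k`. -/
noncomputable def partialMax (ξ : ℕ → ℝ) (k : ℕ) : ℝ :=
  sSup ((fun s : Finset ℕ => ∑ i ∈ s, ξ i) '' {s | s.card = k})

/-- The nonincreasing rearrangement `ξ^↓` of a (nonnegative, null) sequence,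
defined via `ξ^↓_1 = max ξ_i`, `ξ^↓_1 + ξ^↓_2 = max_{i ≠ j} (ξ_i + ξ_j)`, …. -/
noncomputable def decRearr (ξ : ℕ → ℝ) (k : ℕ) : ℝ :=
  partialMax ξ (k + 1) - partialMax ξ k
namespace SNAux
open Finsupp

lemma sum_single_apply (f : ℕ → ℝ) (s : Finset ℕ) (j : ℕ) :
    (∑ i ∈ s, Finsupp.single i (f i)) j = if j ∈ s then f j else 0 := by
  rw [Finsupp.finset_sum_apply]
  simp only [Finsupp.single_apply]
  exact Finset.sum_ite_eq' s j f

lemma truncF_apply (f : ℕ → ℝ) (n j : ℕ) : truncF f n j = if j < n then f j else 0 := by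
  simp [truncF, sum_single_apply, Finset.mem_range]

lemma phi_zero (Φ : SymmetricNorm) : Φ.toFun 0 = 0 := by
  have := Φ.smul_eq 0 0
  simpa using this

/-- Two finsupps with equal absolute values have equal norm. -/
lemma phi_abs_congr (Φ : SymmetricNorm) (ζ ξ : ℕ →₀ ℝ) (h : ∀ j, |ζ j| = |ξ j|) :
    Φ.toFun ζ = Φ.toFun ξ := by
  have hm : Finsupp.mapRange (fun a => |a|) abs_zero ζ
      = Finsupp.mapRange (fun a => |a|) abs_zero ξ := by
    ext j; simp [Finsupp.mapRange_apply, h j]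
  rw [← Φ.abs_invariant ζ, hm, Φ.abs_invariant ξ]

/-- Scaling one coordinate down (for a nonnegative finsupp) decreases the norm. -/
lemma phi_scale_coord (Φ : SymmetricNorm) (ξ ζ : ℕ →₀ ℝ) (i : ℕ) (t : ℝ)
    (ht0 : 0 ≤ t) (ht1 : t ≤ 1) (hpos : ∀ j, 0 ≤ ξ j)
    (hi : ζ i = t * ξ i) (hoff : ∀ j, j ≠ i → ζ j = ξ j) :
    Φ.toFun ζ ≤ Φ.toFun ξ := by
  rcases eq_or_lt_of_le ht1 with rfl | ht1
  · have : ζ = ξ := by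
      ext j
      rcases eq_or_ne j i with rfl | hj
      · simpa using hi
      · exact hoff j hj
    simp [this]
  · set η : ℕ →₀ ℝ := (2 / (1 - t)) • (ζ - ((1 + t) / 2) • ξ) with hη
    have hηj : ∀ j, j ≠ i → η j = ξ j := by
      intro j hj
      have h1t : (1 : ℝ) - t ≠ 0 := by linarith
      simp only [hη, Finsupp.smul_apply, Finsupp.sub_apply, hoff j hj, smul_eq_mul]
      field_simp
      ring
    have hηi : η i = -ξ i := by
      have h1t : (1 : ℝ) - t ≠ 0 := by linarith
      simp only [hη, Finsupp.smul_apply, Finsupp.sub_apply, hi, smul_eq_mul]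
      field_simp
      ring
    have hζ : ζ = ((1 + t) / 2) • ξ + ((1 - t) / 2) • η := by
      ext j
      rcases eq_or_ne j i with rfl | hj
      · simp only [Finsupp.add_apply, Finsupp.smul_apply, hηi, hi, smul_eq_mul]
        ring
      · simp only [Finsupp.add_apply, Finsupp.smul_apply, hηj j hj, hoff j hj, smul_eq_mul]
        ring
    have hηnorm : Φ.toFun η = Φ.toFun ξ := by
      apply phi_abs_congr
      intro j
      rcases eq_or_ne j i with rfl | hj
      · rw [hηi, abs_neg]
      · rw [hηj j hj]
    calc Φ.toFun ζ ≤ Φ.toFun (((1 + t) / 2) • ξ) + Φ.toFun (((1 - t) / 2) • η) := by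
          rw [hζ]; exact Φ.add_le _ _
      _ = ((1 + t) / 2) * Φ.toFun ξ + ((1 - t) / 2) * Φ.toFun ξ := by
          rw [Φ.smul_eq, Φ.smul_eq, hηnorm, abs_of_nonneg (by linarith), abs_of_nonneg (by linarith)]
      _ = Φ.toFun ξ := by ring

end SNAux
namespace SNAux

/-- Monotonicity of a symmetric norm on the nonnegative cone. -/
lemma phi_mono (Φ : SymmetricNorm) (ζ ξ : ℕ →₀ ℝ)
    (hζ : ∀ j, 0 ≤ ζ j) (hle : ∀ j, ζ j ≤ ξ j) : Φ.toFun ζ ≤ Φ.toFun ξ := by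
  have key : ∀ s : Finset ℕ, ∀ ξ : ℕ →₀ ℝ, (∀ j, ζ j ≤ ξ j) →
      (∀ j, j ∉ s → ζ j = ξ j) → Φ.toFun ζ ≤ Φ.toFun ξ := by
    intro s
    induction s using Finset.induction_on with
    | empty =>
      intro ξ hle hout
      have : ζ = ξ := by ext j; exact hout j (by simp)
      simp [this]
    | @insert a s ha ih =>
      intro ξ hle hout
      set ξ' : ℕ →₀ ℝ := ξ + Finsupp.single a (ζ a - ξ a) with hξ'
      have hξ'a : ξ' a = ζ a := by simp [hξ']
      have hξ'j : ∀ j, j ≠ a → ξ' j = ξ j := by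
        intro j hj
        simp [hξ', Finsupp.single_apply, Ne.symm hj]
      have hξpos : ∀ j, 0 ≤ ξ j := fun j => le_trans (hζ j) (hle j)
      have step : Φ.toFun ξ' ≤ Φ.toFun ξ := by
        rcases eq_or_lt_of_le (hξpos a) with h0 | h0
        · apply le_of_eq
          congr 1
          ext j
          rcases eq_or_ne j a with rfl | hj
          · rw [hξ'a]
            have h1 := hle j; have h2 := hζ j
            linarith
          · exact hξ'j j hj
        · exact phi_scale_coord Φ ξ ξ' a (ζ a / ξ a)
            (div_nonneg (hζ a) (le_of_lt h0))
            ((div_le_one h0).mpr (hle a))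
            hξpos
            (by rw [hξ'a]; field_simp)
            hξ'j
      refine le_trans (ih ξ' ?_ ?_) step
      · intro j
        rcases eq_or_ne j a with rfl | hj
        · rw [hξ'a]
        · rw [hξ'j j hj]; exact hle j
      · intro j hj
        rcases eq_or_ne j a with rfl | hj'
        · rw [hξ'a]
        · rw [hξ'j j hj']
          exact hout j (by simp [hj, hj'])
  -- differences are contained in the union of supports
  exact key (ζ.support ∪ ξ.support) ξ hle (by
    intro j hj
    simp only [Finset.mem_union, Finsupp.mem_support_iff, not_or, not_not] at hj
    rw [hj.1, hj.2])

end SNAux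
namespace SNAux

lemma exists_perm_extend (f : ℕ → ℕ) (hf : Function.Injective f) (s : Finset ℕ) :
    ∃ π : Equiv.Perm ℕ, ∀ i ∈ s, π i = f i := by
  induction s using Finset.induction_on with
  | empty => exact ⟨1, by simp⟩
  | @insert a s ha ih =>
    obtain ⟨π, hπ⟩ := ih
    refine ⟨π * Equiv.swap a (π.symm (f a)), ?_⟩
    intro i hi
    rcases Finset.mem_insert.mp hi with rfl | hi
    · simp [Equiv.Perm.mul_apply]
    · have hia : i ≠ a := fun h => ha (h ▸ hi)
      have hib : i ≠ π.symm (f a) := by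
        intro h
        have : π i = f a := by rw [h]; simp
        rw [hπ i hi] at this
        exact hia (hf this)
      simp [Equiv.Perm.mul_apply, Equiv.swap_apply_of_ne_of_ne hia hib, hπ i hi]

lemma phi_embDomain (Φ : SymmetricNorm) (f : ℕ ↪ ℕ) (ξ : ℕ →₀ ℝ) :
    Φ.toFun (Finsupp.embDomain f ξ) = Φ.toFun ξ := by
  obtain ⟨π, hπ⟩ := exists_perm_extend f f.injective ξ.support
  have heq : Finsupp.embDomain f ξ = Finsupp.equivMapDomain π ξ := by
    ext j
    rw [Finsupp.equivMapDomain_apply]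
    by_cases hj : π.symm j ∈ ξ.support
    · have hfj : f (π.symm j) = j := by rw [← hπ _ hj]; simp
      conv_lhs => rw [← hfj, Finsupp.embDomain_apply_self]
    · rw [Finsupp.notMem_support_iff.mp hj]
      by_contra hne
      have hmem : j ∈ (Finsupp.embDomain f ξ).support := Finsupp.mem_support_iff.mpr hne
      rw [Finsupp.support_embDomain, Finset.mem_map] at hmem
      obtain ⟨i, hi, rfl⟩ := hmem
      have : π i = f i := hπ i hi
      rw [← this] at hj
      simp at hj
      exact (Finsupp.mem_support_iff.mp hi) hj
  rw [heq, Φ.perm_invariant]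

end SNAux
namespace SNAux

lemma exists_argmax (ξ : ℕ → ℝ) (hpos : ∀ i, 0 ≤ ξ i) (h0 : Tendsto ξ atTop (nhds 0))
    (F : Finset ℕ) : ∃ j, j ∉ F ∧ ∀ i, i ∉ F → ξ i ≤ ξ j := by
  by_cases hz : ∀ i ∉ F, ξ i ≤ 0
  · obtain ⟨j, hj⟩ := Infinite.exists_notMem_finset F
    refine ⟨j, hj, ?_⟩
    intro i hi
    exact le_trans (hz i hi) (hpos j)
  · push_neg at hz
    obtain ⟨i₀, hi₀F, hi₀⟩ := hz
    have hev : ∀ᶠ j in atTop, ξ j < ξ i₀ := h0.eventually (gt_mem_nhds hi₀)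
    obtain ⟨N, hN⟩ := eventually_atTop.mp hev
    have hT : i₀ ∈ (insert i₀ (Finset.range N)) \ F := by
      simp [Finset.mem_sdiff, hi₀F]
    obtain ⟨j, hj, hjmax⟩ := Finset.exists_max_image ((insert i₀ (Finset.range N)) \ F) ξ ⟨i₀, hT⟩
    have hjF : j ∉ F := (Finset.mem_sdiff.mp hj).2
    refine ⟨j, hjF, ?_⟩
    intro i hi
    by_cases hiN : i < N
    · exact hjmax i (by simp [Finset.mem_sdiff, hiN, hi])
    · have : ξ i < ξ i₀ := hN i (by omega)
      exact le_trans (le_of_lt this) (hjmax i₀ hT)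

end SNAux
namespace SNAux

variable (ξ : ℕ → ℝ) (hpos : ∀ i, 0 ≤ ξ i) (h0 : Tendsto ξ atTop (nhds 0))

/-- Greedy pick of a maximiser outside `F`. -/
noncomputable def pick (F : Finset ℕ) : ℕ := Classical.choose (exists_argmax ξ hpos h0 F)

lemma pick_spec (F : Finset ℕ) :
    pick ξ hpos h0 F ∉ F ∧ ∀ i, i ∉ F → ξ i ≤ ξ (pick ξ hpos h0 F) :=
  Classical.choose_spec (exists_argmax ξ hpos h0 F)

/-- The greedy set of the `k` largest entries. -/
noncomputable def gset : ℕ → Finset ℕ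
  | 0 => ∅
  | k + 1 => insert (pick ξ hpos h0 (gset k)) (gset k)

/-- The greedy enumeration. -/
noncomputable def gr (k : ℕ) : ℕ := pick ξ hpos h0 (gset ξ hpos h0 k)

lemma gset_succ (k : ℕ) : gset ξ hpos h0 (k + 1) = insert (gr ξ hpos h0 k) (gset ξ hpos h0 k) := rfl

lemma gr_not_mem (k : ℕ) : gr ξ hpos h0 k ∉ gset ξ hpos h0 k := (pick_spec ξ hpos h0 _).1

lemma gr_max (k : ℕ) : ∀ i, i ∉ gset ξ hpos h0 k → ξ i ≤ ξ (gr ξ hpos h0 k) :=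
  (pick_spec ξ hpos h0 _).2

lemma card_gset (k : ℕ) : (gset ξ hpos h0 k).card = k := by
  induction k with
  | zero => rfl
  | succ k ih => rw [gset_succ, Finset.card_insert_of_notMem (gr_not_mem ξ hpos h0 k), ih]

lemma gset_mono {k l : ℕ} (h : k ≤ l) : gset ξ hpos h0 k ⊆ gset ξ hpos h0 l := by
  induction l with
  | zero => simp at h; subst h; exact subset_rfl
  | succ l ih =>
    rcases Nat.lt_or_ge k (l+1) with hl | hl
    · exact le_trans (ih (by omega)) (by rw [gset_succ]; exact Finset.subset_insert _ _)
    · have : k = l + 1 := by omega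
      subst this; exact subset_rfl

lemma gset_eq_image (k : ℕ) :
    gset ξ hpos h0 k = (Finset.range k).image (gr ξ hpos h0) := by
  induction k with
  | zero => rfl
  | succ k ih => rw [gset_succ, ih, Finset.range_add_one, Finset.image_insert]

lemma gr_injective : Function.Injective (gr ξ hpos h0) := by
  intro i j hij
  by_contra hne
  wlog hlt : i < j generalizing i j
  · exact this hij.symm (Ne.symm hne) (by omega)
  · have : gr ξ hpos h0 i ∈ gset ξ hpos h0 j := by
      rw [gset_eq_image]
      exact Finset.mem_image.mpr ⟨i, Finset.mem_range.mpr hlt, rfl⟩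
    rw [hij] at this
    exact gr_not_mem ξ hpos h0 j this

lemma exchange (k : ℕ) : ∀ s : Finset ℕ, s.card = k →
    ∑ i ∈ s, ξ i ≤ ∑ i ∈ gset ξ hpos h0 k, ξ i := by
  induction k with
  | zero => intro s hs; rw [Finset.card_eq_zero.mp hs]; simp [gset]
  | succ k ih =>
    intro s hs
    by_cases hsub : s ⊆ gset ξ hpos h0 (k+1)
    · have : s = gset ξ hpos h0 (k+1) :=
        Finset.eq_of_subset_of_card_le hsub (by rw [hs, card_gset])
      rw [this]
    · obtain ⟨j, hjs, hjg⟩ := Finset.not_subset.mp hsub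
      have hjg' : j ∉ gset ξ hpos h0 k := fun h =>
        hjg (gset_mono ξ hpos h0 (Nat.le_succ k) h)
      have hj : ξ j ≤ ξ (gr ξ hpos h0 k) := gr_max ξ hpos h0 k j hjg'
      have herase : (s.erase j).card = k := by rw [Finset.card_erase_of_mem hjs, hs]; omega
      calc ∑ i ∈ s, ξ i = ∑ i ∈ s.erase j, ξ i + ξ j := by
            rw [Finset.sum_erase_add s ξ hjs]
        _ ≤ ∑ i ∈ gset ξ hpos h0 k, ξ i + ξ (gr ξ hpos h0 k) :=
            add_le_add (ih _ herase) hj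
        _ = ∑ i ∈ gset ξ hpos h0 (k+1), ξ i := by
            rw [gset_succ, Finset.sum_insert (gr_not_mem ξ hpos h0 k)]
            ring

lemma partialMax_eq (k : ℕ) : partialMax ξ k = ∑ i ∈ gset ξ hpos h0 k, ξ i := by
  apply IsGreatest.csSup_eq
  constructor
  · exact ⟨gset ξ hpos h0 k, card_gset ξ hpos h0 k, rfl⟩
  · rintro x ⟨s, hs, rfl⟩
    exact exchange ξ hpos h0 k s hs

lemma decRearr_eq (k : ℕ) : decRearr ξ k = ξ (gr ξ hpos h0 k) := by
  rw [decRearr, partialMax_eq ξ hpos h0, partialMax_eq ξ hpos h0, gset_succ,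
    Finset.sum_insert (gr_not_mem ξ hpos h0 k)]
  ring

include hpos h0 in
lemma decRearr_nonneg (k : ℕ) : 0 ≤ decRearr ξ k := by
  rw [decRearr_eq ξ hpos h0]; exact hpos _

include hpos h0 in
lemma decRearr_antitone : Antitone (decRearr ξ) := by
  apply antitone_nat_of_succ_le
  intro k
  rw [decRearr_eq ξ hpos h0, decRearr_eq ξ hpos h0]
  apply gr_max ξ hpos h0 k
  intro h
  exact gr_not_mem ξ hpos h0 (k+1) (gset_mono ξ hpos h0 (Nat.le_succ k) h)

include hpos h0 in
/-- If `k+1` distinct indices all carry value `≥ c`, then the `(k+1)`-st largest value is `≥ c`. -/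
lemma le_decRearr_of_card (k : ℕ) (c : ℝ) (A : Finset ℕ) (hA : A.card = k + 1)
    (hc : ∀ j ∈ A, c ≤ ξ j) : c ≤ decRearr ξ k := by
  by_contra hlt
  push_neg at hlt
  rw [decRearr_eq ξ hpos h0] at hlt
  have hsub : A ⊆ gset ξ hpos h0 k := by
    intro j hj
    by_contra hjg
    exact absurd (le_trans (hc j hj) (gr_max ξ hpos h0 k j hjg)) (not_le.mpr hlt)
  have := Finset.card_le_card hsub
  rw [hA, card_gset] at this
  omega

lemma decRearr_le_gset (k : ℕ) : ∀ j ∈ gset ξ hpos h0 (k+1), decRearr ξ k ≤ ξ j := by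
  intro j hj
  rw [gset_eq_image] at hj
  obtain ⟨i, hi, rfl⟩ := Finset.mem_image.mp hj
  rw [Finset.mem_range] at hi
  calc decRearr ξ k ≤ decRearr ξ i := decRearr_antitone ξ hpos h0 (by omega)
    _ = ξ (gr ξ hpos h0 i) := decRearr_eq ξ hpos h0 i

include hpos h0 in
lemma decRearr_tendsto_zero : Tendsto (decRearr ξ) atTop (nhds 0) := by
  rw [Metric.tendsto_atTop]
  intro ε hε
  obtain ⟨N, hN⟩ := eventually_atTop.mp (h0.eventually (gt_mem_nhds hε))
  have hex : ∃ j ∈ gset ξ hpos h0 (N+1), N ≤ j := by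
    by_contra hall
    push_neg at hall
    have hsub : gset ξ hpos h0 (N+1) ⊆ Finset.range N := by
      intro j hj
      exact Finset.mem_range.mpr (hall j hj)
    have := Finset.card_le_card hsub
    rw [card_gset, Finset.card_range] at this
    omega
  obtain ⟨j, hjg, hjN⟩ := hex
  have h1 : decRearr ξ N < ε := lt_of_le_of_lt (decRearr_le_gset ξ hpos h0 N j hjg) (hN j hjN)
  refine ⟨N, fun k hk => ?_⟩
  rw [Real.dist_eq, sub_zero, abs_of_nonneg (decRearr_nonneg ξ hpos h0 k)]
  exact lt_of_le_of_lt (decRearr_antitone ξ hpos h0 hk) h1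

end SNAux
namespace SNAux

lemma trunc_mono_fun (Φ : SymmetricNorm) (f g : ℕ → ℝ) (hf : ∀ i, 0 ≤ f i)
    (hfg : ∀ i, f i ≤ g i) (N : ℕ) :
    Φ.toFun (truncF f N) ≤ Φ.toFun (truncF g N) := by
  apply phi_mono
  · intro j; rw [truncF_apply]; split_ifs with h; exacts [hf j, le_refl 0]
  · intro j; rw [truncF_apply, truncF_apply]; split_ifs with h; exacts [hfg j, le_refl 0]

lemma trunc_mono_N (Φ : SymmetricNorm) (f : ℕ → ℝ) (hf : ∀ i, 0 ≤ f i) :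
    Monotone (fun N => Φ.toFun (truncF f N)) := by
  intro N M hNM
  apply phi_mono
  · intro j; rw [truncF_apply]; split_ifs with h; exacts [hf j, le_refl 0]
  · intro j; rw [truncF_apply, truncF_apply]
    by_cases h : j < N
    · rw [if_pos h, if_pos (lt_of_lt_of_le h hNM)]
    · rw [if_neg h]; split_ifs; exacts [hf j, le_refl 0]

/-- `Φ` of a truncation of the decreasing rearrangement is dominated by `Φ` of
some truncation of the sequence itself. -/
lemma phi_trunc_decRearr (Φ : SymmetricNorm) (ξ : ℕ → ℝ) (hpos : ∀ i, 0 ≤ ξ i)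
    (h0 : Tendsto ξ atTop (nhds 0)) (m : ℕ) :
    ∃ N, Φ.toFun (truncF (decRearr ξ) m) ≤ Φ.toFun (truncF ξ N) := by
  classical
  set emb : ℕ ↪ ℕ := ⟨gr ξ hpos h0, gr_injective ξ hpos h0⟩ with hemb
  set G : ℕ →₀ ℝ := ∑ i ∈ gset ξ hpos h0 m, Finsupp.single i (ξ i) with hG
  have hGapp : ∀ j, G j = if j ∈ gset ξ hpos h0 m then ξ j else 0 := fun j =>
    sum_single_apply ξ _ j
  have hEq : Finsupp.embDomain emb (truncF (decRearr ξ) m) = G := by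
    ext j
    by_cases hj : j ∈ gset ξ hpos h0 m
    · rw [gset_eq_image] at hj
      obtain ⟨i, hi, rfl⟩ := Finset.mem_image.mp hj
      rw [Finset.mem_range] at hi
      have hmem : gr ξ hpos h0 i ∈ gset ξ hpos h0 m := by
        rw [gset_eq_image]; exact Finset.mem_image.mpr ⟨i, Finset.mem_range.mpr hi, rfl⟩
      have h2 : G (gr ξ hpos h0 i) = ξ (gr ξ hpos h0 i) := by rw [hGapp, if_pos hmem]
      have h1 : (Finsupp.embDomain emb (truncF (decRearr ξ) m)) (gr ξ hpos h0 i)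
          = decRearr ξ i := by
        have he : gr ξ hpos h0 i = emb i := rfl
        rw [he, Finsupp.embDomain_apply_self, truncF_apply, if_pos hi]
      rw [h1, h2, decRearr_eq ξ hpos h0]
    · rw [hGapp, if_neg hj]
      by_cases hr : j ∈ Set.range emb
      · obtain ⟨i, rfl⟩ := hr
        rw [Finsupp.embDomain_apply_self, truncF_apply]
        split_ifs with hi
        · exfalso
          apply hj
          rw [gset_eq_image]
          exact Finset.mem_image.mpr ⟨i, Finset.mem_range.mpr hi, rfl⟩
        · rfl
      · exact Finsupp.embDomain_notin_range _ _ _ hr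
  have h1 : Φ.toFun (truncF (decRearr ξ) m) = Φ.toFun G := by
    rw [← hEq, phi_embDomain]
  set N := (gset ξ hpos h0 m).sup id + 1 with hN
  refine ⟨N, ?_⟩
  rw [h1]
  apply phi_mono
  · intro j; rw [hGapp]; split_ifs; exacts [hpos j, le_refl 0]
  · intro j
    rw [hGapp, truncF_apply]
    split_ifs with h h'
    · rfl
    · exfalso
      apply h'
      have := Finset.le_sup (f := id) h
      simp only [id] at this
      omega
    · exact hpos j
    · rfl

/-- Truncations of a shifted tail have the same norms as truncations of the
zeroed-out sequence. -/
lemma phi_trunc_shift (Φ : SymmetricNorm) (f : ℕ → ℝ) (m N : ℕ) :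
    Φ.toFun (truncF (fun i => f (m + i)) N)
      = Φ.toFun (truncF (fun k => if k < m then 0 else f k) (m + N)) := by
  set emb : ℕ ↪ ℕ := ⟨fun i => m + i, fun a b h => by exact Nat.add_left_cancel h⟩ with hemb
  have hEq : Finsupp.embDomain emb (truncF (fun i => f (m + i)) N)
      = truncF (fun k => if k < m then 0 else f k) (m + N) := by
    ext j
    by_cases hj : m ≤ j
    · obtain ⟨i, rfl⟩ : ∃ i, j = m + i := ⟨j - m, by omega⟩
      have h1 : (Finsupp.embDomain emb (truncF (fun i => f (m + i)) N)) (m + i)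
          = truncF (fun i => f (m + i)) N i := by
        have he : m + i = emb i := rfl
        rw [he, Finsupp.embDomain_apply_self]
      rw [h1, truncF_apply, truncF_apply]
      by_cases h : i < N
      · rw [if_pos h, if_pos (show m + i < m + N by omega), if_neg (show ¬ (m + i < m) by omega)]
      · rw [if_neg h, if_neg (show ¬ (m + i < m + N) by omega)]
    · have hr : j ∉ Set.range emb := by
        rintro ⟨i, rfl⟩
        exact hj (Nat.le_add_right m i)
      rw [Finsupp.embDomain_notin_range _ _ _ hr, truncF_apply]
      split_ifs with h h' <;> first | rfl | omega
  rw [← hEq, phi_embDomain]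

end SNAux
/-- For a regular symmetric norm `Φ` and `ξ ∈ ℓ_Φ^+`, the nonincreasing
rearrangements of the truncations `ξ^(n) = (ξ_1,…,ξ_n,0,0,…)` converge in the
norm `Φ` to the nonincreasing rearrangement of `ξ`. -/
theorem decRearr_trunc_tendsto (Φ : SymmetricNorm) (hΦ : Φ.Regular)
    (ξ : ℕ → ℝ) (hξ : MemLPhiPlus Φ ξ) :
    Filter.Tendsto
      (fun n => Φ.ext fun i =>
        |decRearr (fun j => if j < n then ξ j else 0) i - decRearr ξ i|)
      Filter.atTop (nhds 0) := by
  classical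
  obtain ⟨hpos, h0, L, hL⟩ := hξ
  set μ : ℕ → ℝ := decRearr ξ with hμdef
  have hμpos : ∀ k, 0 ≤ μ k := SNAux.decRearr_nonneg ξ hpos h0
  have hμanti : Antitone μ := SNAux.decRearr_antitone ξ hpos h0
  have hμ0 : Tendsto μ atTop (nhds 0) := SNAux.decRearr_tendsto_zero ξ hpos h0
  have hξle : ∀ N, Φ.toFun (truncF ξ N) ≤ L :=
    fun N => Monotone.ge_of_tendsto (SNAux.trunc_mono_N Φ ξ hpos) hL N
  have hμle : ∀ m, Φ.toFun (truncF μ m) ≤ L := by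
    intro m
    obtain ⟨N, hN⟩ := SNAux.phi_trunc_decRearr Φ ξ hpos h0 m
    exact le_trans hN (hξle N)
  have hμmono : Monotone (fun m => Φ.toFun (truncF μ m)) := SNAux.trunc_mono_N Φ μ hμpos
  have hμbdd : BddAbove (Set.range fun m => Φ.toFun (truncF μ m)) := by
    refine ⟨L, ?_⟩; rintro x ⟨m, rfl⟩; exact hμle m
  have hμmem : MemLPhi Φ μ := ⟨hμ0, ⟨_, tendsto_atTop_ciSup hμmono hμbdd⟩⟩
  have R : Tendsto (fun m => Φ.ext fun i => μ (m + i)) atTop (nhds 0) := hΦ μ hμmem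
  -- tail truncation norms
  set T : ℕ → ℕ → ℝ := fun m N => Φ.toFun (truncF (fun i => μ (m + i)) N) with hT
  have hTmono : ∀ m, Monotone (T m) := fun m => SNAux.trunc_mono_N Φ _ (fun i => hμpos _)
  have hTζ : ∀ m N, T m N = Φ.toFun (truncF (fun k => if k < m then 0 else μ k) (m + N)) :=
    fun m N => SNAux.phi_trunc_shift Φ μ m N
  have hTle : ∀ m N, T m N ≤ L := by
    intro m N
    rw [hTζ]
    refine le_trans (SNAux.trunc_mono_fun Φ _ μ ?_ ?_ (m + N)) (hμle (m + N))
    · intro i; split_ifs; exacts [le_refl 0, hμpos i]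
    · intro i; split_ifs; exacts [hμpos i, le_refl _]
  have hTbdd : ∀ m, BddAbove (Set.range (T m)) := by
    intro m; refine ⟨L, ?_⟩; rintro x ⟨N, rfl⟩; exact hTle m N
  set A : ℕ → ℝ := fun m => ⨆ N, T m N with hA
  have hTtend : ∀ m, Tendsto (T m) atTop (nhds (A m)) :=
    fun m => tendsto_atTop_ciSup (hTmono m) (hTbdd m)
  have hAeq : ∀ m, Φ.ext (fun i => μ (m + i)) = A m := fun m => (hTtend m).limUnder_eq
  have hA0 : ∀ m, 0 ≤ A m := fun m => le_trans (Φ.nonneg _) (le_ciSup (hTbdd m) 0)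
  have RA : Tendsto A atTop (nhds 0) := by
    apply R.congr hAeq
  -- truncations of the zeroed-out sequence are bounded by `A m`
  have hζle : ∀ m K, Φ.toFun (truncF (fun k => if k < m then 0 else μ k) K) ≤ A m := by
    intro m K
    have h1 : Φ.toFun (truncF (fun k => if k < m then 0 else μ k) K)
        ≤ Φ.toFun (truncF (fun k => if k < m then 0 else μ k) (m + K)) := by
      apply SNAux.trunc_mono_N Φ _ ?_ (Nat.le_add_left K m)
      intro i; split_ifs; exacts [le_refl 0, hμpos i]
    rw [← hTζ m K] at h1
    exact le_trans h1 (le_ciSup (hTbdd m) K)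
  -- final ε-argument
  rw [Metric.tendsto_atTop]
  intro ε hε
  obtain ⟨M, hM⟩ := (Metric.tendsto_atTop.mp RA) ε hε
  have hAM : A M < ε := by
    have := hM M (le_refl M)
    rwa [Real.dist_eq, sub_zero, abs_of_nonneg (hA0 M)] at this
  have hEv : ∀ᶠ n in atTop, ∀ k ∈ Finset.range M, 0 < μ k → ∀ j, n ≤ j → ξ j < μ k := by
    rw [Filter.eventually_all_finset]
    intro k _
    by_cases hμk : 0 < μ k
    · obtain ⟨Nk, hNk⟩ := eventually_atTop.mp (h0.eventually (gt_mem_nhds hμk))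
      filter_upwards [eventually_ge_atTop Nk] with n hn
      intro _ j hj
      exact hNk j (le_trans hn hj)
    · filter_upwards with n hc
      exact absurd hc hμk
  obtain ⟨N₀, hN₀⟩ := eventually_atTop.mp hEv
  refine ⟨N₀, fun n hn => ?_⟩
  set ξn : ℕ → ℝ := fun j => if j < n then ξ j else 0 with hξn
  have hposn : ∀ i, 0 ≤ ξn i := by
    intro i; rw [hξn]; dsimp only; split_ifs; exacts [hpos i, le_refl 0]
  have h0n : Tendsto ξn atTop (nhds 0) := by
    have hev : (fun _ : ℕ => (0 : ℝ)) =ᶠ[atTop] ξn := by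
      filter_upwards [eventually_ge_atTop n] with j hj
      rw [hξn]; dsimp only; rw [if_neg (by omega)]
    exact Tendsto.congr' hev tendsto_const_nhds
  set δ : ℕ → ℝ := fun i => |decRearr ξn i - decRearr ξ i| with hδdef
  have hle1 : ∀ i, decRearr ξn i ≤ μ i := by
    intro i
    apply SNAux.le_decRearr_of_card ξ hpos h0 i _ (SNAux.gset ξn hposn h0n (i + 1))
      (SNAux.card_gset ξn hposn h0n (i + 1))
    intro j hj
    refine le_trans (SNAux.decRearr_le_gset ξn hposn h0n i j hj) ?_
    rw [hξn]; dsimp only; split_ifs; exacts [le_refl _, hpos j]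
  have hδ : ∀ i, δ i = μ i - decRearr ξn i := by
    intro i
    rw [hδdef]; dsimp only
    rw [abs_sub_comm, abs_of_nonneg (sub_nonneg.mpr (hle1 i))]
  have hδpos : ∀ i, 0 ≤ δ i := fun i => abs_nonneg _
  have hδleμ : ∀ i, δ i ≤ μ i := by
    intro i
    rw [hδ i]
    have := SNAux.decRearr_nonneg ξn hposn h0n i
    linarith
  have hδζ : ∀ i, δ i ≤ (if i < M then 0 else μ i) := by
    intro i
    by_cases hi : i < M
    · rw [if_pos hi, hδ i, sub_nonpos]
      by_cases h : 0 < μ i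
      · have htail := hN₀ n hn i (Finset.mem_range.mpr hi) h
        apply SNAux.le_decRearr_of_card ξn hposn h0n i (μ i) (SNAux.gset ξ hpos h0 (i + 1))
          (SNAux.card_gset ξ hpos h0 (i + 1))
        intro j hj
        have h1 : μ i ≤ ξ j := SNAux.decRearr_le_gset ξ hpos h0 i j hj
        have hjn : j < n := by
          by_contra hjn
          exact absurd h1 (not_le.mpr (htail j (by omega)))
        rw [hξn]; dsimp only; rw [if_pos hjn]; exact h1
      · exact le_trans (not_lt.mp h) (SNAux.decRearr_nonneg ξn hposn h0n i)
    · rw [if_neg hi]; exact hδleμ i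
  have hδmono : Monotone (fun K => Φ.toFun (truncF δ K)) := SNAux.trunc_mono_N Φ δ hδpos
  have hδbdd : BddAbove (Set.range fun K => Φ.toFun (truncF δ K)) := by
    refine ⟨L, ?_⟩; rintro x ⟨K, rfl⟩
    exact le_trans (SNAux.trunc_mono_fun Φ δ μ hδpos hδleμ K) (hμle K)
  have hδtend : Tendsto (fun K => Φ.toFun (truncF δ K)) atTop
      (nhds (⨆ K, Φ.toFun (truncF δ K))) := tendsto_atTop_ciSup hδmono hδbdd
  have hBeq : Φ.ext δ = ⨆ K, Φ.toFun (truncF δ K) := hδtend.limUnder_eq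
  have hgoal : (Φ.ext fun i => |decRearr (fun j => if j < n then ξ j else 0) i - decRearr ξ i|)
      = Φ.ext δ := rfl
  rw [hgoal, hBeq]
  have hB0 : 0 ≤ ⨆ K, Φ.toFun (truncF δ K) :=
    le_trans (Φ.nonneg _) (le_ciSup hδbdd 0)
  have hBle : (⨆ K, Φ.toFun (truncF δ K)) ≤ A M := by
    apply ciSup_le
    intro K
    exact le_trans (SNAux.trunc_mono_fun Φ δ _ hδpos hδζ K) (hζle M K)
  rw [Real.dist_eq, sub_zero, abs_of_nonneg hB0]
  exact lt_of_le_of_lt hBle hAM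
end

section
/- Let Φ be a regular symmetric norm. Then for all ξ, η ∈ ℓ_Φ^+: Φ(|ξ^↓_1 − η^↓_1|, |ξ^↓_2 − η^↓_2|, ...) ≤ Φ(|ξ_1 − η_1|, |ξ_2 − η_2|, ...); that is, the map ξ ↦ ξ^↓ from ℓ_Φ^+ to ℓ_Φ is 1-Lipschitz. -/
open Filter

section Part1
variable (Φ : SymmetricNorm)

lemma truncF_apply (x : ℕ → ℝ) (n j : ℕ) : truncF x n j = if j < n then x j else 0 := by
  classical
  unfold truncF
  rw [Finsupp.finset_sum_apply]
  simp only [Finsupp.single_apply]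
  rw [show (∑ i ∈ Finset.range n, if i = j then x i else 0)
      = if j ∈ Finset.range n then x j else 0 from Finset.sum_ite_eq' _ _ _]
  simp [Finset.mem_range]

lemma Phi_zero : Φ.toFun 0 = 0 := by
  have h := Φ.smul_eq 0 0
  simpa using h

lemma Phi_abs_eq (u v : ℕ →₀ ℝ) (h : ∀ i, |u i| = |v i|) : Φ.toFun u = Φ.toFun v := by
  rw [← Φ.abs_invariant u, ← Φ.abs_invariant v]
  congr 1
  ext i
  simp only [Finsupp.mapRange_apply]
  exact h i

lemma Phi_update_le (v : ℕ →₀ ℝ) (a : ℕ) (c : ℝ) (h : |c| ≤ |v a|) :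
    Φ.toFun (v.update a c) ≤ Φ.toFun v := by
  classical
  by_cases hva : v a = 0
  · have hc : c = 0 := by
      rw [hva] at h; simpa using abs_nonpos_iff.mp (by simpa using h)
    have : v.update a c = v := by
      ext i
      rw [Finsupp.coe_update]
      by_cases hi : i = a
      · subst hi; simp [hc, hva]
      · simp [Function.update_apply, hi]
    rw [this]
  · set w := v a with hw
    set θ : ℝ := c / w with hθdef
    have hθ : |θ| ≤ 1 := by
      rw [hθdef, abs_div]
      rw [div_le_one (abs_pos.mpr hva)]
      exact h
    have hθ1 : -1 ≤ θ := by cases abs_le.mp hθ; assumption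
    have hθ2 : θ ≤ 1 := by cases abs_le.mp hθ; assumption
    set α : ℝ := (1 + θ) / 2 with hα
    set β : ℝ := (1 - θ) / 2 with hβ
    have hα0 : 0 ≤ α := by rw [hα]; linarith
    have hβ0 : 0 ≤ β := by rw [hβ]; linarith
    have hαβ : α + β = 1 := by rw [hα, hβ]; ring
    have key : v.update a c = α • v + β • (v.update a (-w)) := by
      ext i
      rw [Finsupp.add_apply, Finsupp.smul_apply, Finsupp.smul_apply,
        Finsupp.coe_update, Finsupp.coe_update]
      by_cases hi : i = a
      · subst hi
        simp only [Function.update_self, smul_eq_mul]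
        rw [hα, hβ, hθdef]
        field_simp
        ring
      · simp only [Function.update_apply, if_neg hi, smul_eq_mul]
        rw [← add_mul, hαβ, one_mul]
    rw [key]
    calc Φ.toFun (α • v + β • v.update a (-w))
        ≤ Φ.toFun (α • v) + Φ.toFun (β • v.update a (-w)) := Φ.add_le _ _
      _ = α * Φ.toFun v + β * Φ.toFun (v.update a (-w)) := by
          rw [Φ.smul_eq, Φ.smul_eq, abs_of_nonneg hα0, abs_of_nonneg hβ0]
      _ = α * Φ.toFun v + β * Φ.toFun v := by
          rw [Phi_abs_eq Φ (v.update a (-w)) v]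
          intro i
          rw [Finsupp.coe_update]
          by_cases hi : i = a
          · subst hi; simp [abs_neg, hw]
          · simp [Function.update_apply, hi]
      _ = Φ.toFun v := by rw [← add_mul, hαβ, one_mul]

lemma Phi_mono_on : ∀ (s : Finset ℕ) (u v : ℕ →₀ ℝ), (∀ i, |u i| ≤ |v i|) →
    (∀ i, i ∉ s → u i = v i) → Φ.toFun u ≤ Φ.toFun v := by
  classical
  intro s
  induction s using Finset.induction_on with
  | empty =>
    intro u v _ h0
    have : u = v := by ext i; exact h0 i (by simp)
    rw [this]
  | @insert a s hna ih =>
    intro u v h h0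
    have hstep : Φ.toFun (v.update a (u a)) ≤ Φ.toFun v := Phi_update_le Φ v a (u a) (h a)
    refine le_trans (ih u (v.update a (u a)) ?_ ?_) hstep
    · intro i
      rw [Finsupp.coe_update]
      by_cases hi : i = a
      · subst hi; simp
      · simp only [Function.update_apply, if_neg hi]; exact h i
    · intro i his
      rw [Finsupp.coe_update]
      by_cases hi : i = a
      · subst hi; simp
      · simp only [Function.update_apply, if_neg hi]
        exact h0 i (by simp [hi, his])

lemma Phi_mono (u v : ℕ →₀ ℝ) (h : ∀ i, |u i| ≤ |v i|) : Φ.toFun u ≤ Φ.toFun v := by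
  classical
  refine Phi_mono_on Φ (u.support ∪ v.support) u v h ?_
  intro i hi
  rw [Finset.mem_union, not_or] at hi
  rw [Finsupp.notMem_support_iff.mp hi.1, Finsupp.notMem_support_iff.mp hi.2]

lemma Phi_trunc_mono (w : ℕ → ℝ) {n m : ℕ} (hnm : n ≤ m) :
    Φ.toFun (truncF w n) ≤ Φ.toFun (truncF w m) := by
  refine Phi_mono Φ _ _ fun i => ?_
  rw [truncF_apply, truncF_apply]
  by_cases hi : i < n
  · rw [if_pos hi, if_pos (lt_of_lt_of_le hi hnm)]
  · rw [if_neg hi]; simp [abs_nonneg]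

lemma Phi_single (i : ℕ) (c : ℝ) : Φ.toFun (Finsupp.single i c) = |c| := by
  have h1 : Finsupp.single i c = c • Finsupp.single i (1 : ℝ) := by
    rw [Finsupp.smul_single, smul_eq_mul, mul_one]
  have h2 : Φ.toFun (Finsupp.single i (1 : ℝ)) = 1 := by
    have := Φ.perm_invariant (Equiv.swap 0 i) (Finsupp.single 0 1)
    rw [Finsupp.equivMapDomain_single, Equiv.swap_apply_left] at this
    rw [this, Φ.norm_single]
  rw [h1, Φ.smul_eq, h2, mul_one]

lemma Phi_sum_le (s : Finset ℕ) (f : ℕ → (ℕ →₀ ℝ)) :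
    Φ.toFun (∑ i ∈ s, f i) ≤ ∑ i ∈ s, Φ.toFun (f i) := by
  classical
  induction s using Finset.induction_on with
  | empty => simp [Phi_zero]
  | @insert a s hna ih =>
    rw [Finset.sum_insert hna, Finset.sum_insert hna]
    exact le_trans (Φ.add_le _ _) (by linarith)

lemma Phi_trunc_le_sum (w : ℕ → ℝ) (n : ℕ) :
    Φ.toFun (truncF w n) ≤ ∑ i ∈ Finset.range n, |w i| := by
  refine le_trans (Phi_sum_le Φ _ _) ?_
  refine Finset.sum_le_sum fun i _ => ?_
  rw [Phi_single]

lemma Phi_perm (x : ℕ → ℝ) (π : Equiv.Perm ℕ) (m : ℕ) (hπ : ∀ i, i < m ↔ π i < m) :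
    Φ.toFun (truncF (fun i => x (π i)) m) = Φ.toFun (truncF x m) := by
  have key : truncF (fun i => x (π i)) m = Finsupp.equivMapDomain π.symm (truncF x m) := by
    ext j
    rw [Finsupp.equivMapDomain_apply, Equiv.symm_symm, truncF_apply, truncF_apply]
    by_cases hj : j < m
    · rw [if_pos hj, if_pos ((hπ j).mp hj)]
    · rw [if_neg hj, if_neg (fun h => hj ((hπ j).mpr h))]
  rw [key, Φ.perm_invariant]

end Part1
section Part2

/-- `G t s = (|s| - t)⁺`, the convex gauge used for submajorization. -/
def G (t s : ℝ) : ℝ := max (|s| - t) 0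

lemma max_shift (t u v d : ℝ) (huv : u ≤ v) (hd : 0 ≤ d) :
    max (u + d - t) 0 + max (v - t) 0 ≤ max (u - t) 0 + max (v + d - t) 0 := by
  simp only [max_def]
  split_ifs <;> linarith

lemma G_decomp (t s : ℝ) (ht : 0 ≤ t) : G t s = max (s - t) 0 + max (-s - t) 0 := by
  unfold G
  rcases le_total 0 s with h | h
  · rw [abs_of_nonneg h, max_eq_right (by linarith : -s - t ≤ 0), add_zero]
  · rw [abs_of_nonpos h, max_eq_right (by linarith : s - t ≤ 0), zero_add]

lemma G_shift (t : ℝ) (ht : 0 ≤ t) (u v d : ℝ) (huv : u ≤ v) (hd : 0 ≤ d) :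
    G t (u + d) + G t v ≤ G t u + G t (v + d) := by
  have p1 := max_shift t u v d huv hd
  have p2 := max_shift t (-v - d) (-u - d) d (by linarith) hd
  rw [G_decomp t (u + d) ht, G_decomp t v ht, G_decomp t u ht, G_decomp t (v + d) ht]
  have e1 : -v - d + d - t = -v - t := by ring
  have e2 : -u - d + d - t = -u - t := by ring
  have e3 : -(u + d) - t = -u - d - t := by ring
  have e4 : -(v + d) - t = -v - d - t := by ring
  rw [e1, e2] at p2
  rw [e3, e4]
  linarith

lemma G_exchange (t : ℝ) (ht : 0 ≤ t) (a b c d : ℝ) (hba : b ≤ a) (hdc : d ≤ c) :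
    G t (a - c) + G t (b - d) ≤ G t (a - d) + G t (b - c) := by
  have h := G_shift t ht (b - c) (b - d) (a - b) (by linarith) (by linarith)
  have e1 : b - c + (a - b) = a - c := by ring
  have e2 : b - d + (a - b) = a - d := by ring
  rw [e1, e2] at h
  linarith

lemma sort_sum_le (t : ℝ) (ht : 0 ≤ t) (x z : ℕ → ℝ)
    (hx : ∀ i j, i ≤ j → x j ≤ x i) (hz : ∀ i j, i ≤ j → z j ≤ z i) :
    ∀ (n : ℕ) (s : Finset ℕ) (τ : Equiv.Perm ℕ), s.card ≤ n → (∀ i ∈ s, τ i ∈ s) →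
    ∑ i ∈ s, G t (x i - z i) ≤ ∑ i ∈ s, G t (x i - z (τ i)) := by
  classical
  intro n
  induction n with
  | zero =>
    intro s τ hcard _
    rw [Finset.card_eq_zero.mp (Nat.le_zero.mp hcard)]
    simp
  | succ n ih =>
    intro s τ hcard hmaps
    rcases s.eq_empty_or_nonempty with rfl | hne
    · simp
    set j := s.min' hne with hjdef
    have hjs : j ∈ s := s.min'_mem hne
    have himg : s.image τ = s := by
      apply Finset.eq_of_subset_of_card_le
      · intro i hi
        obtain ⟨a, ha, rfl⟩ := Finset.mem_image.mp hi
        exact hmaps a ha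
      · rw [Finset.card_image_of_injective _ τ.injective]
    obtain ⟨k, hks, hkj⟩ := Finset.mem_image.mp (himg ▸ hjs)
    set τ' : Equiv.Perm ℕ := τ * Equiv.swap j k with hτ'def
    have hτ'j : τ' j = j := by
      rw [hτ'def, Equiv.Perm.mul_apply, Equiv.swap_apply_left, hkj]
    have hτ'maps : ∀ i ∈ s, τ' i ∈ s := by
      intro i hi
      rw [hτ'def, Equiv.Perm.mul_apply]
      by_cases h1 : i = j
      · subst h1; rw [Equiv.swap_apply_left]; exact hmaps k hks
      · by_cases h2 : i = k
        · subst h2; rw [Equiv.swap_apply_right]; exact hmaps j hjs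
        · rw [Equiv.swap_apply_of_ne_of_ne h1 h2]; exact hmaps i hi
    have step1 : ∑ i ∈ s, G t (x i - z (τ' i)) ≤ ∑ i ∈ s, G t (x i - z (τ i)) := by
      rcases eq_or_ne j k with rfl | hjk
      · apply le_of_eq
        refine Finset.sum_congr rfl fun i _ => ?_
        rw [hτ'def]; simp
      · have hkj' : k ∈ s.erase j := Finset.mem_erase.mpr ⟨fun h => hjk h.symm, hks⟩
        have L1 : ∑ i ∈ s, G t (x i - z (τ' i)) =
            G t (x j - z (τ' j)) + (G t (x k - z (τ' k)) +
              ∑ i ∈ (s.erase j).erase k, G t (x i - z (τ' i))) := by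
          rw [← Finset.add_sum_erase s (fun i => G t (x i - z (τ' i))) hjs,
            ← Finset.add_sum_erase (s.erase j) (fun i => G t (x i - z (τ' i))) hkj']
        have L2 : ∑ i ∈ s, G t (x i - z (τ i)) =
            G t (x j - z (τ j)) + (G t (x k - z (τ k)) +
              ∑ i ∈ (s.erase j).erase k, G t (x i - z (τ i))) := by
          rw [← Finset.add_sum_erase s (fun i => G t (x i - z (τ i))) hjs,
            ← Finset.add_sum_erase (s.erase j) (fun i => G t (x i - z (τ i))) hkj']
        have hrest : ∑ i ∈ (s.erase j).erase k, G t (x i - z (τ' i)) =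
            ∑ i ∈ (s.erase j).erase k, G t (x i - z (τ i)) := by
          refine Finset.sum_congr rfl fun i hi => ?_
          have hik := (Finset.mem_erase.mp hi).1
          have hij := (Finset.mem_erase.mp (Finset.mem_erase.mp hi).2).1
          rw [hτ'def, Equiv.Perm.mul_apply, Equiv.swap_apply_of_ne_of_ne hij hik]
        have hτ'k : τ' k = τ j := by
          rw [hτ'def, Equiv.Perm.mul_apply, Equiv.swap_apply_right]
        have hjk_le : j ≤ k := s.min'_le k hks
        have hjτj : j ≤ τ j := s.min'_le _ (hmaps j hjs)
        have hex := G_exchange t ht (x j) (x k) (z j) (z (τ j))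
          (hx j k hjk_le) (hz j (τ j) hjτj)
        rw [L1, L2, hτ'j, hτ'k, hkj]
        linarith
    have hcard' : (s.erase j).card ≤ n := by
      rw [Finset.card_erase_of_mem hjs]
      omega
    have hmaps' : ∀ i ∈ s.erase j, τ' i ∈ s.erase j := by
      intro i hi
      obtain ⟨hij, his⟩ := Finset.mem_erase.mp hi
      refine Finset.mem_erase.mpr ⟨?_, hτ'maps i his⟩
      intro h
      exact hij (τ'.injective (h.trans hτ'j.symm))
    have ih' := ih (s.erase j) τ' hcard' hmaps'
    calc ∑ i ∈ s, G t (x i - z i)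
        = G t (x j - z j) + ∑ i ∈ s.erase j, G t (x i - z i) :=
          (Finset.add_sum_erase _ _ hjs).symm
      _ ≤ G t (x j - z j) + ∑ i ∈ s.erase j, G t (x i - z (τ' i)) := by linarith
      _ = ∑ i ∈ s, G t (x i - z (τ' i)) := by
          rw [← Finset.add_sum_erase _ (fun i => G t (x i - z (τ' i))) hjs, hτ'j]
      _ ≤ ∑ i ∈ s, G t (x i - z (τ i)) := step1

end Part2
section Part3

/-- Truncation as a plain function. -/
def truncFn (x : ℕ → ℝ) (m : ℕ) : ℕ → ℝ := fun i => if i < m then x i else 0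

lemma pmSet_nonempty (x : ℕ → ℝ) (k : ℕ) :
    ((fun s : Finset ℕ => ∑ i ∈ s, x i) '' {s | s.card = k}).Nonempty :=
  ⟨_, ⟨Finset.range k, Finset.card_range k, rfl⟩⟩

lemma pmSet_bddAbove (x : ℕ → ℝ) (C : ℝ) (hC : ∀ i, x i ≤ C) (k : ℕ) :
    BddAbove ((fun s : Finset ℕ => ∑ i ∈ s, x i) '' {s | s.card = k}) := by
  refine ⟨(k : ℝ) * C, ?_⟩
  rintro a ⟨s, hs, rfl⟩
  calc ∑ i ∈ s, x i ≤ ∑ _i ∈ s, C := Finset.sum_le_sum fun i _ => hC i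
    _ = (k : ℝ) * C := by rw [Finset.sum_const, hs, nsmul_eq_mul]

lemma le_pM (x : ℕ → ℝ) (C : ℝ) (hC : ∀ i, x i ≤ C) {k : ℕ} {s : Finset ℕ}
    (hs : s.card = k) : ∑ i ∈ s, x i ≤ partialMax x k :=
  le_csSup (pmSet_bddAbove x C hC k) ⟨s, hs, rfl⟩

lemma pM_le (x : ℕ → ℝ) {k : ℕ} {b : ℝ}
    (h : ∀ s : Finset ℕ, s.card = k → ∑ i ∈ s, x i ≤ b) : partialMax x k ≤ b := by
  refine csSup_le (pmSet_nonempty x k) ?_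
  rintro a ⟨s, hs, rfl⟩
  exact h s hs

lemma pM_mono (x y : ℕ → ℝ) (C : ℝ) (hxy : ∀ i, x i ≤ y i) (hC : ∀ i, y i ≤ C) (k : ℕ) :
    partialMax x k ≤ partialMax y k := by
  refine pM_le x fun s hs => ?_
  exact le_trans (Finset.sum_le_sum fun i _ => hxy i) (le_pM y C hC hs)

lemma sum_le_sorted (x : ℕ → ℝ) (hx : ∀ i j, i ≤ j → x j ≤ x i) :
    ∀ (k : ℕ) (s : Finset ℕ), s.card = k → ∑ i ∈ s, x i ≤ ∑ i ∈ Finset.range k, x i := by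
  classical
  intro k
  induction k with
  | zero => intro s hs; rw [Finset.card_eq_zero.mp hs]; simp
  | succ k ih =>
    intro s hs
    have hne : s.Nonempty := Finset.card_pos.mp (by omega)
    set a := s.max' hne with ha
    have has : a ∈ s := s.max'_mem hne
    have herase : (s.erase a).card = k := by rw [Finset.card_erase_of_mem has, hs]; omega
    have hka : k ≤ a := by
      have hsub : s ⊆ Finset.range (a + 1) := by
        intro i hi
        rw [Finset.mem_range]
        exact Nat.lt_succ_of_le (s.le_max' i hi)
      have := Finset.card_le_card hsub
      rw [hs, Finset.card_range] at this
      omega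
    calc ∑ i ∈ s, x i = x a + ∑ i ∈ s.erase a, x i := (Finset.add_sum_erase _ _ has).symm
      _ ≤ x k + ∑ i ∈ Finset.range k, x i := add_le_add (hx k a hka) (ih _ herase)
      _ = ∑ i ∈ Finset.range (k + 1), x i := by rw [Finset.sum_range_succ]; ring

lemma pM_sorted (x : ℕ → ℝ) (C : ℝ) (hC : ∀ i, x i ≤ C)
    (hx : ∀ i j, i ≤ j → x j ≤ x i) (k : ℕ) :
    partialMax x k = ∑ i ∈ Finset.range k, x i := by
  refine le_antisymm (pM_le x (sum_le_sorted x hx k)) ?_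
  exact le_pM x C hC (Finset.card_range k)

lemma pM_perm (x : ℕ → ℝ) (π : Equiv.Perm ℕ) (k : ℕ) :
    partialMax (fun i => x (π i)) k = partialMax x k := by
  classical
  unfold partialMax
  congr 1
  ext a
  constructor
  · rintro ⟨s, hs, rfl⟩
    refine ⟨s.image π, ?_, ?_⟩
    · simp only [Set.mem_setOf_eq] at hs ⊢
      rw [Finset.card_image_of_injective _ π.injective, hs]
    · simp only []
      rw [Finset.sum_image (fun i _ j _ h => π.injective h)]
  · rintro ⟨s, hs, rfl⟩
    refine ⟨s.image π.symm, ?_, ?_⟩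
    · simp only [Set.mem_setOf_eq] at hs ⊢
      rw [Finset.card_image_of_injective _ π.symm.injective, hs]
    · simp only []
      rw [Finset.sum_image (fun i _ j _ h => π.symm.injective h)]
      simp

lemma pM_approx (x : ℕ → ℝ) (C : ℝ) (h0 : ∀ i, 0 ≤ x i) (hC : ∀ i, x i ≤ C)
    (k : ℕ) (ε : ℝ) (hε : 0 < ε) :
    ∃ M : ℕ, ∀ m, M ≤ m → partialMax x k - ε ≤ partialMax (truncFn x m) k := by
  have hC0 : (0 : ℝ) ≤ C := le_trans (h0 0) (hC 0)
  have htC : ∀ m i, truncFn x m i ≤ C := by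
    intro m i; unfold truncFn; split_ifs; exacts [hC i, hC0]
  obtain ⟨a, ⟨s, hs, rfl⟩, ha⟩ := exists_lt_of_lt_csSup (pmSet_nonempty x k)
    (show partialMax x k - ε < partialMax x k by linarith)
  refine ⟨s.sup id + 1, fun m hm => ?_⟩
  have hsum : ∑ i ∈ s, truncFn x m i = ∑ i ∈ s, x i := by
    refine Finset.sum_congr rfl fun i hi => ?_
    unfold truncFn
    rw [if_pos]
    have : i ≤ s.sup id := Finset.le_sup (f := id) hi
    omega
  calc partialMax x k - ε ≤ ∑ i ∈ s, x i := le_of_lt ha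
    _ = ∑ i ∈ s, truncFn x m i := hsum.symm
    _ ≤ partialMax (truncFn x m) k := le_pM _ C (htC m) hs

lemma exists_sort_perm (x : ℕ → ℝ) (m : ℕ) (h0 : ∀ i, 0 ≤ x i) (hm : ∀ i, m ≤ i → x i = 0) :
    ∃ π : Equiv.Perm ℕ, (∀ i, i < m ↔ π i < m) ∧ (∀ i, m ≤ i → π i = i) ∧
      (∀ i j, i ≤ j → x (π j) ≤ x (π i)) := by
  classical
  set f : Fin m → ℝ := fun k => - x (k : ℕ) with hf
  set σ : Equiv.Perm (Fin m) := Tuple.sort f with hσ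
  have hmono : Monotone (f ∘ σ) := Tuple.monotone_sort f
  set π : Equiv.Perm ℕ := σ.extendDomain (Fin.equivSubtype (n := m)) with hπ
  have happly : ∀ (i : ℕ) (h : i < m), π i = ((σ ⟨i, h⟩ : Fin m) : ℕ) := by
    intro i h
    have := Equiv.Perm.extendDomain_apply_subtype σ (Fin.equivSubtype (n := m)) (b := i) h
    rw [hπ, this]
    rfl
  have hfix : ∀ i, m ≤ i → π i = i := by
    intro i hi
    exact Equiv.Perm.extendDomain_apply_not_subtype σ _ (by omega)
  have hiff : ∀ i, i < m ↔ π i < m := by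
    intro i
    constructor
    · intro h; rw [happly i h]; exact (σ ⟨i, h⟩).isLt
    · intro h
      by_contra hc
      push_neg at hc
      rw [hfix i hc] at h
      omega
  refine ⟨π, hiff, hfix, ?_⟩
  intro i j hij
  by_cases hjm : j < m
  · have him : i < m := lt_of_le_of_lt hij hjm
    rw [happly i him, happly j hjm]
    have : f (σ ⟨i, him⟩) ≤ f (σ ⟨j, hjm⟩) := hmono (show (⟨i, him⟩ : Fin m) ≤ ⟨j, hjm⟩ from hij)
    rw [hf] at this
    simpa using this
  · push_neg at hjm
    rw [hfix j hjm, hm j hjm]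
    by_cases him : i < m
    · rw [happly i him]; exact h0 _
    · push_neg at him
      rw [hfix i him, hm i him]

lemma decRearr_eq (x : ℕ → ℝ) (C : ℝ) (π : Equiv.Perm ℕ)
    (h0 : ∀ i, 0 ≤ x i) (hC : ∀ i, x i ≤ C)
    (hsort : ∀ i j, i ≤ j → x (π j) ≤ x (π i)) (k : ℕ) :
    decRearr x k = x (π k) := by
  unfold decRearr
  rw [← pM_perm x π (k + 1), ← pM_perm x π k,
    pM_sorted _ C (fun i => hC (π i)) hsort, pM_sorted _ C (fun i => hC (π i)) hsort,
    Finset.sum_range_succ]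
  ring

end Part3
section Part4

lemma swap_lt_iff {i0 j0 M : ℕ} (h0 : i0 < M) (h1 : j0 < M) :
    ∀ i, i < M ↔ Equiv.swap i0 j0 i < M := by
  intro i
  rcases eq_or_ne i i0 with rfl | hi
  · rw [Equiv.swap_apply_left]; omega
  rcases eq_or_ne i j0 with rfl | hj
  · rw [Equiv.swap_apply_right]; omega
  · rw [Equiv.swap_apply_of_ne_of_ne hi hj]

lemma kyFan (Φ : SymmetricNorm) (M : ℕ) :
    ∀ (N : ℕ) (u v : ℕ → ℝ),
      (∀ i, 0 ≤ u i) → (∀ i, 0 ≤ v i) →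
      (∀ i j, i ≤ j → u j ≤ u i) → (∀ i j, i ≤ j → v j ≤ v i) →
      (∀ i, M ≤ i → u i = 0) → (∀ i, M ≤ i → v i = 0) →
      (∀ k, ∑ i ∈ Finset.range k, u i ≤ ∑ i ∈ Finset.range k, v i) →
      ((Finset.range M).filter (fun i => u i ≠ v i)).card ≤ N →
      Φ.toFun (truncF u M) ≤ Φ.toFun (truncF v M) := by
  classical
  intro N
  induction N with
  | zero =>
    intro u v hu0 hv0 hus hvs huM hvM hmaj hcard
    have hfe : (Finset.range M).filter (fun i => u i ≠ v i) = ∅ :=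
      Finset.card_eq_zero.mp (Nat.le_zero.mp hcard)
    have heq : truncF u M = truncF v M := by
      ext i
      rw [truncF_apply, truncF_apply]
      by_cases hi : i < M
      · rw [if_pos hi, if_pos hi]
        by_contra hne
        have hmem : i ∈ (Finset.range M).filter (fun i => u i ≠ v i) :=
          Finset.mem_filter.mpr ⟨Finset.mem_range.mpr hi, hne⟩
        rw [hfe] at hmem
        exact absurd hmem (Finset.notMem_empty i)
      · rw [if_neg hi, if_neg hi]
    rw [heq]
  | succ N ih =>
    intro u v hu0 hv0 hus hvs huM hvM hmaj hcard
    by_cases hle : ∀ i, u i ≤ v i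
    · refine Phi_mono Φ _ _ fun i => ?_
      rw [truncF_apply, truncF_apply]
      by_cases hi : i < M
      · rw [if_pos hi, if_pos hi, abs_of_nonneg (hu0 i), abs_of_nonneg (hv0 i)]
        exact hle i
      · rw [if_neg hi]; simp [abs_nonneg]
    · push_neg at hle
      have hex : ∃ j, v j < u j := hle
      set j0 := Nat.find hex with hj0def
      have hj0 : v j0 < u j0 := Nat.find_spec hex
      have hj0min : ∀ i, i < j0 → u i ≤ v i := fun i hi => not_lt.mp (Nat.find_min hex hi)
      have hj0M : j0 < M := by
        by_contra h
        push_neg at h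
        have h1 := huM j0 h
        have h2 := hv0 j0
        linarith
      have hlt : ∃ i, i < j0 ∧ u i < v i := by
        have h1 := hmaj (j0 + 1)
        rw [Finset.sum_range_succ, Finset.sum_range_succ] at h1
        have h2 : ∑ i ∈ Finset.range j0, u i < ∑ i ∈ Finset.range j0, v i := by linarith
        obtain ⟨i, hi, hiuv⟩ := Finset.exists_lt_of_sum_lt h2
        exact ⟨i, Finset.mem_range.mp hi, hiuv⟩
      obtain ⟨iw, hiwlt, hiw⟩ := hlt
      set i0 := Nat.findGreatest (fun i => u i < v i) j0 with hi0def
      have hP0 : u i0 < v i0 := by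
        rw [hi0def]
        exact Nat.findGreatest_spec (P := fun i => u i < v i) (le_of_lt hiwlt) hiw
      have hi0le : i0 ≤ j0 := Nat.findGreatest_le j0
      have hi0j0 : i0 < j0 := lt_of_le_of_ne hi0le (by intro h; rw [h] at hP0; linarith)
      have hmid : ∀ mm, i0 < mm → mm < j0 → u mm = v mm := by
        intro mm h1 h2
        rw [hi0def] at h1
        have hnot := Nat.findGreatest_is_greatest (P := fun i => u i < v i) h1 (le_of_lt h2)
        exact le_antisymm (hj0min mm h2) (not_lt.mp hnot)
      set ε := min (v i0 - u i0) (u j0 - v j0) with hεdef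
      have hε0 : 0 < ε := lt_min (by linarith) (by linarith)
      have hεi : ε ≤ v i0 - u i0 := min_le_left _ _
      have hεj : ε ≤ u j0 - v j0 := min_le_right _ _
      have huij : u j0 ≤ u i0 := hus i0 j0 (le_of_lt hi0j0)
      have hord : v j0 + ε ≤ v i0 - ε := by linarith
      have hvij : v j0 < v i0 := by linarith
      set v' := fun mm => if mm = i0 then v i0 - ε else if mm = j0 then v j0 + ε else v mm
        with hv'def
      have hv'i0 : v' i0 = v i0 - ε := by simp [hv'def]
      have hv'j0 : v' j0 = v j0 + ε := by
        have : j0 ≠ i0 := by omega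
        simp [hv'def, this]
      have hv'other : ∀ mm, mm ≠ i0 → mm ≠ j0 → v' mm = v mm := by
        intro mm h1 h2
        simp [hv'def, h1, h2]
      have hi0M : i0 < M := lt_trans hi0j0 hj0M
      set lam := ε / (v i0 - v j0) with hlamdef
      have hlam0 : 0 ≤ lam := div_nonneg (le_of_lt hε0) (by linarith)
      have hlam1 : lam ≤ 1 := by
        rw [hlamdef, div_le_one (by linarith)]
        linarith
      have hlamval : lam * (v i0 - v j0) = ε := by
        rw [hlamdef]
        exact div_mul_cancel₀ ε (by intro h; rw [sub_eq_zero] at h; linarith)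
      have hcombo : truncF v' M =
          (1 - lam) • truncF v M + lam • truncF (fun mm => v (Equiv.swap i0 j0 mm)) M := by
        ext jj
        rw [Finsupp.add_apply, Finsupp.smul_apply, Finsupp.smul_apply, truncF_apply,
          truncF_apply, truncF_apply]
        by_cases hjjM : jj < M
        · rw [if_pos hjjM, if_pos hjjM, if_pos hjjM]
          simp only [smul_eq_mul]
          rcases eq_or_ne jj i0 with rfl | h1
          · rw [Equiv.swap_apply_left, hv'i0]
            nlinarith [hlamval]
          · rcases eq_or_ne jj j0 with rfl | h2
            · rw [Equiv.swap_apply_right, hv'j0]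
              nlinarith [hlamval]
            · rw [Equiv.swap_apply_of_ne_of_ne h1 h2, hv'other jj h1 h2]
              ring
        · rw [if_neg hjjM, if_neg hjjM, if_neg hjjM]
          simp
      have hswapperm : Φ.toFun (truncF (fun mm => v (Equiv.swap i0 j0 mm)) M)
          = Φ.toFun (truncF v M) :=
        Phi_perm Φ v (Equiv.swap i0 j0) M (swap_lt_iff hi0M hj0M)
      have hc1 : Φ.toFun (truncF v' M) ≤ Φ.toFun (truncF v M) := by
        rw [hcombo]
        calc Φ.toFun ((1 - lam) • truncF v M +
              lam • truncF (fun mm => v (Equiv.swap i0 j0 mm)) M)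
            ≤ Φ.toFun ((1 - lam) • truncF v M) +
              Φ.toFun (lam • truncF (fun mm => v (Equiv.swap i0 j0 mm)) M) := Φ.add_le _ _
          _ = (1 - lam) * Φ.toFun (truncF v M) + lam * Φ.toFun (truncF v M) := by
              rw [Φ.smul_eq, Φ.smul_eq, abs_of_nonneg hlam0,
                abs_of_nonneg (by linarith : (0:ℝ) ≤ 1 - lam), hswapperm]
          _ = Φ.toFun (truncF v M) := by ring
      have hu_i0 : u i0 ≤ v i0 - ε := by linarith
      have hu_j0 : v j0 + ε ≤ u j0 := by linarith
      have hv'0 : ∀ mm, 0 ≤ v' mm := by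
        intro mm
        rcases eq_or_ne mm i0 with rfl | h1
        · rw [hv'i0]; linarith [hu0 i0]
        rcases eq_or_ne mm j0 with rfl | h2
        · rw [hv'j0]; linarith [hv0 j0]
        · rw [hv'other mm h1 h2]; exact hv0 mm
      have hv'M : ∀ mm, M ≤ mm → v' mm = 0 := by
        intro mm hmm
        rw [hv'other mm (by omega) (by omega)]
        exact hvM mm hmm
      have hv's : ∀ aa bb, aa ≤ bb → v' bb ≤ v' aa := by
        intro aa bb hab
        rcases eq_or_ne bb i0 with rfl | hbi
        · rcases eq_or_ne aa i0 with rfl | hai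
          · exact le_rfl
          · rw [hv'other aa hai (by omega), hv'i0]
            have := hvs aa i0 hab
            linarith
        rcases eq_or_ne bb j0 with rfl | hbj
        · rw [hv'j0]
          rcases eq_or_ne aa i0 with rfl | hai
          · rw [hv'i0]; linarith
          rcases eq_or_ne aa j0 with rfl | haj
          · rw [hv'j0]
          · rw [hv'other aa hai haj]
            have haj0 : aa < j0 := lt_of_le_of_ne hab haj
            rcases Nat.lt_or_ge aa i0 with h | h
            · have := hvs aa i0 (le_of_lt h); linarith
            · have hai' : i0 < aa := lt_of_le_of_ne h (Ne.symm hai)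
              have h1 := hmid aa hai' haj0
              have h2 := hus aa j0 (le_of_lt haj0)
              linarith
        · rw [hv'other bb hbi hbj]
          rcases eq_or_ne aa i0 with rfl | hai
          · rw [hv'i0]
            have hib : i0 < bb := lt_of_le_of_ne hab (Ne.symm hbi)
            rcases Nat.lt_or_ge bb j0 with h | h
            · have h1 := hmid bb hib h
              have h2 := hus i0 bb hab
              linarith
            · have hbj' : j0 < bb := lt_of_le_of_ne h (Ne.symm hbj)
              have := hvs j0 bb (le_of_lt hbj')
              linarith
          rcases eq_or_ne aa j0 with rfl | haj
          · rw [hv'j0]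
            have := hvs j0 bb hab
            linarith
          · rw [hv'other aa hai haj]
            exact hvs aa bb hab
      have hmaj' : ∀ k, ∑ i ∈ Finset.range k, u i ≤ ∑ i ∈ Finset.range k, v' i := by
        intro k
        rcases le_or_gt k i0 with hk | hk
        · have heq : ∑ i ∈ Finset.range k, v' i = ∑ i ∈ Finset.range k, v i := by
            refine Finset.sum_congr rfl fun i hi => ?_
            have hik : i < k := Finset.mem_range.mp hi
            exact hv'other i (by omega) (by omega)
          rw [heq]; exact hmaj k
        · rcases le_or_gt k j0 with hk2 | hk2
          · have hdiff : ∑ i ∈ Finset.range k, (v' i - v i) = -ε := by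
              rw [Finset.sum_eq_single_of_mem i0 (Finset.mem_range.mpr hk)]
              · rw [hv'i0]; ring
              · intro b hb hbne
                have hbk : b < k := Finset.mem_range.mp hb
                rw [hv'other b hbne (by omega)]; ring
            have h2 : ∑ i ∈ Finset.range k, v' i = ∑ i ∈ Finset.range k, v i - ε := by
              have h3 := Finset.sum_sub_distrib (s := Finset.range k) (f := v') (g := v)
              rw [h3] at hdiff
              linarith
            have key : ∑ i ∈ Finset.range k, u i + ε ≤ ∑ i ∈ Finset.range k, v i := by
              have hsplit := Finset.sum_range_add_sum_Ico (fun i => v i - u i)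
                (Nat.succ_le_of_lt hk)
              have hIco : ∑ i ∈ Finset.Ico (i0 + 1) k, (v i - u i) = 0 := by
                refine Finset.sum_eq_zero fun i hi => ?_
                obtain ⟨h1, h2⟩ := Finset.mem_Ico.mp hi
                rw [hmid i (by omega) (by omega)]; ring
              have hbase : ε ≤ ∑ i ∈ Finset.range (i0 + 1), (v i - u i) := by
                rw [Finset.sum_range_succ, Finset.sum_sub_distrib]
                have := hmaj i0
                linarith
              have hfin : ε ≤ ∑ i ∈ Finset.range k, (v i - u i) := by
                rw [← hsplit, hIco]
                linarith
              rw [Finset.sum_sub_distrib] at hfin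
              linarith
            rw [h2]
            linarith
          · have hdiff : ∑ i ∈ Finset.range k, (v' i - v i) = 0 := by
              have hsub : ({i0, j0} : Finset ℕ) ⊆ Finset.range k := by
                intro i hi
                rcases Finset.mem_insert.mp hi with rfl | hi
                · exact Finset.mem_range.mpr (by omega)
                · rw [Finset.mem_singleton.mp hi]
                  exact Finset.mem_range.mpr (by omega)
              rw [← Finset.sum_subset hsub]
              · rw [Finset.sum_pair (by omega : i0 ≠ j0), hv'i0, hv'j0]; ring
              · intro i _ hi
                rw [Finset.mem_insert, Finset.mem_singleton] at hi
                push_neg at hi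
                rw [hv'other i hi.1 hi.2]; ring
            have h2 : ∑ i ∈ Finset.range k, v' i = ∑ i ∈ Finset.range k, v i := by
              have h3 := Finset.sum_sub_distrib (s := Finset.range k) (f := v') (g := v)
              rw [h3] at hdiff
              linarith
            rw [h2]; exact hmaj k
      have hcard' : ((Finset.range M).filter (fun i => u i ≠ v' i)).card ≤ N := by
        have hsub : (Finset.range M).filter (fun i => u i ≠ v' i) ⊆
            (Finset.range M).filter (fun i => u i ≠ v i) := by
          intro i hi
          obtain ⟨hiM, hine⟩ := Finset.mem_filter.mp hi
          refine Finset.mem_filter.mpr ⟨hiM, ?_⟩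
          rcases eq_or_ne i i0 with rfl | h1
          · exact ne_of_lt hP0
          rcases eq_or_ne i j0 with rfl | h2
          · exact ne_of_gt hj0
          · rw [← hv'other i h1 h2]; exact hine
        have hssub : (Finset.range M).filter (fun i => u i ≠ v' i) ⊂
            (Finset.range M).filter (fun i => u i ≠ v i) := by
          rw [Finset.ssubset_iff_of_subset hsub]
          rcases le_total (v i0 - u i0) (u j0 - v j0) with h | h
          · refine ⟨i0, Finset.mem_filter.mpr ⟨Finset.mem_range.mpr hi0M, ne_of_lt hP0⟩, ?_⟩
            intro hmem
            apply (Finset.mem_filter.mp hmem).2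
            rw [hv'i0, hεdef, min_eq_left h]
            ring
          · refine ⟨j0, Finset.mem_filter.mpr ⟨Finset.mem_range.mpr hj0M, ne_of_gt hj0⟩, ?_⟩
            intro hmem
            apply (Finset.mem_filter.mp hmem).2
            rw [hv'j0, hεdef, min_eq_right h]
            ring
        have := Finset.card_lt_card hssub
        omega
      exact le_trans (ih u v' hu0 hv'0 hus hv's huM hv'M hmaj' hcard') hc1

end Part4
section Part5

lemma finite_core (Φ : SymmetricNorm) (m : ℕ) (C : ℝ) (x' y' : ℕ → ℝ)
    (hx0 : ∀ i, 0 ≤ x' i) (hxC : ∀ i, x' i ≤ C) (hxm : ∀ i, m ≤ i → x' i = 0)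
    (hy0 : ∀ i, 0 ≤ y' i) (hyC : ∀ i, y' i ≤ C) (hym : ∀ i, m ≤ i → y' i = 0) :
    Φ.toFun (truncF (fun i => |decRearr x' i - decRearr y' i|) m) ≤
      Φ.toFun (truncF (fun i => |x' i - y' i|) m) := by
  classical
  obtain ⟨π, hπiff, hπfix, hπsort⟩ := exists_sort_perm x' m hx0 hxm
  obtain ⟨σ, hσiff, hσfix, hσsort⟩ := exists_sort_perm y' m hy0 hym
  set xs := fun i => x' (π i) with hxs
  set ys := fun i => y' (σ i) with hys
  have hxsort : ∀ i j, i ≤ j → xs j ≤ xs i := by simp only [hxs]; exact hπsort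
  have hysort : ∀ i j, i ≤ j → ys j ≤ ys i := by simp only [hys]; exact hσsort
  have hdx : ∀ k, decRearr x' k = xs k := by
    simp only [hxs]; exact fun k => decRearr_eq x' C π hx0 hxC hπsort k
  have hdy : ∀ k, decRearr y' k = ys k := by
    simp only [hys]; exact fun k => decRearr_eq y' C σ hy0 hyC hσsort k
  set D := fun i => |x' i - y' i| with hD
  set d := fun i => |xs i - ys i| with hd
  have hD0 : ∀ i, 0 ≤ D i := fun i => abs_nonneg _
  have hDC : ∀ i, D i ≤ C := by
    intro i
    simp only [hD]
    exact abs_le.mpr ⟨by linarith [hx0 i, hyC i], by linarith [hxC i, hy0 i]⟩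
  have hDm : ∀ i, m ≤ i → D i = 0 := by
    intro i hi
    simp only [hD]
    rw [hxm i hi, hym i hi]
    simp
  have hd0 : ∀ i, 0 ≤ d i := fun i => abs_nonneg _
  have hxs0 : ∀ i, 0 ≤ xs i := by simp only [hxs]; exact fun i => hx0 _
  have hys0 : ∀ i, 0 ≤ ys i := by simp only [hys]; exact fun i => hy0 _
  have hxsC : ∀ i, xs i ≤ C := by simp only [hxs]; exact fun i => hxC _
  have hysC : ∀ i, ys i ≤ C := by simp only [hys]; exact fun i => hyC _
  have hxsm : ∀ i, m ≤ i → xs i = 0 := by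
    simp only [hxs]; exact fun i hi => by rw [hπfix i hi]; exact hxm i hi
  have hysm : ∀ i, m ≤ i → ys i = 0 := by
    simp only [hys]; exact fun i hi => by rw [hσfix i hi]; exact hym i hi
  have hdC : ∀ i, d i ≤ C := by
    intro i
    simp only [hd]
    exact abs_le.mpr ⟨by linarith [hxs0 i, hysC i], by linarith [hxsC i, hys0 i]⟩
  have hdm : ∀ i, m ≤ i → d i = 0 := by
    intro i hi
    simp only [hd]
    rw [hxsm i hi, hysm i hi]
    simp
  obtain ⟨ρ, hρiff, hρfix, hρsort⟩ := exists_sort_perm D m hD0 hDm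
  obtain ⟨φp, hφiff, hφfix, hφsort⟩ := exists_sort_perm d m hd0 hdm
  set Ds := fun i => D (ρ i) with hDs
  set ds := fun i => d (φp i) with hds
  have hDsort : ∀ i j, i ≤ j → Ds j ≤ Ds i := by simp only [hDs]; exact hρsort
  have hdsort : ∀ i j, i ≤ j → ds j ≤ ds i := by simp only [hds]; exact hφsort
  have hDs0 : ∀ i, 0 ≤ Ds i := by simp only [hDs]; exact fun i => hD0 _
  have hds0 : ∀ i, 0 ≤ ds i := by simp only [hds]; exact fun i => hd0 _
  have hDsm : ∀ i, m ≤ i → Ds i = 0 := by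
    simp only [hDs]; exact fun i hi => by rw [hρfix i hi]; exact hDm i hi
  have hdsm : ∀ i, m ≤ i → ds i = 0 := by
    simp only [hds]; exact fun i hi => by rw [hφfix i hi]; exact hdm i hi
  have hpmD : ∀ k, partialMax D k = ∑ i ∈ Finset.range k, Ds i := by
    intro k
    rw [← pM_perm D ρ k]
    have := pM_sorted (fun i => D (ρ i)) C (fun i => hDC _) hρsort k
    simp only [hDs]
    exact this
  have hpmd : ∀ k, partialMax d k = ∑ i ∈ Finset.range k, ds i := by
    intro k
    rw [← pM_perm d φp k]
    have := pM_sorted (fun i => d (φp i)) C (fun i => hdC _) hφsort k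
    simp only [hds]
    exact this
  -- submajorization
  have hsub : ∀ k, partialMax d k ≤ partialMax D k := by
    intro k
    set t := Ds k with htdef
    have ht0 : 0 ≤ t := hDs0 _
    have hb : partialMax d k ≤ (k : ℝ) * t + ∑ i ∈ Finset.range m, max (d i - t) 0 := by
      refine pM_le d fun s hs => ?_
      have step1 : ∑ i ∈ s, d i ≤ ∑ i ∈ s, (t + max (d i - t) 0) :=
        Finset.sum_le_sum fun i _ => by
          have := le_max_left (d i - t) (0 : ℝ)
          linarith
      have step2 : ∑ i ∈ s, (t + max (d i - t) 0)
          = (k : ℝ) * t + ∑ i ∈ s, max (d i - t) 0 := by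
        rw [Finset.sum_add_distrib, Finset.sum_const, hs, nsmul_eq_mul]
      have step3 : ∑ i ∈ s, max (d i - t) 0 ≤ ∑ i ∈ Finset.range m, max (d i - t) 0 := by
        have e1 : ∑ i ∈ s ∩ Finset.range m, max (d i - t) 0
            = ∑ i ∈ s, max (d i - t) 0 := by
          refine Finset.sum_subset Finset.inter_subset_left fun i hi hni => ?_
          have him : m ≤ i := by
            by_contra h
            push_neg at h
            exact hni (Finset.mem_inter.mpr ⟨hi, Finset.mem_range.mpr h⟩)
          rw [hdm i him]
          exact max_eq_right (by linarith)
        rw [← e1]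
        exact Finset.sum_le_sum_of_subset_of_nonneg Finset.inter_subset_right
          fun i _ _ => le_max_right _ _
      linarith
    have ha : ∑ i ∈ Finset.range m, max (d i - t) 0
        ≤ ∑ i ∈ Finset.range m, max (D i - t) 0 := by
      have eG1 : ∀ i, max (d i - t) 0 = G t (xs i - ys i) := by
        intro i; simp only [hd, G]
      have eG2 : ∀ i, max (D i - t) 0 = G t (x' i - y' i) := by
        intro i; simp only [hD, G]
      set τ : Equiv.Perm ℕ := π.trans σ.symm with hτ
      have hπsymm : ∀ a, a < m → π.symm a < m := by
        intro a ha
        have := (hπiff (π.symm a)).mpr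
        rw [Equiv.apply_symm_apply] at this
        exact this ha
      have hσsymm : ∀ a, a < m → σ.symm a < m := by
        intro a ha
        have := (hσiff (σ.symm a)).mpr
        rw [Equiv.apply_symm_apply] at this
        exact this ha
      have hre : ∑ i ∈ Finset.range m, G t (x' i - y' i)
          = ∑ i ∈ Finset.range m, G t (xs i - ys (τ i)) := by
        refine Finset.sum_nbij' (fun i => π.symm i) (fun i => π i) ?_ ?_ ?_ ?_ ?_
        · intro a ha
          rw [Finset.mem_range] at ha ⊢
          exact hπsymm a ha
        · intro a ha
          rw [Finset.mem_range] at ha ⊢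
          exact (hπiff a).mp ha
        · intro a _; exact Equiv.apply_symm_apply π a
        · intro a _; exact Equiv.symm_apply_apply π a
        · intro a _
          simp only [hxs, hys, hτ, Equiv.trans_apply, Equiv.apply_symm_apply]
      have hτmaps : ∀ i ∈ Finset.range m, τ i ∈ Finset.range m := by
        intro i hi
        rw [Finset.mem_range] at hi ⊢
        simp only [hτ, Equiv.trans_apply]
        exact hσsymm _ ((hπiff i).mp hi)
      have hsort := sort_sum_le t ht0 xs ys hxsort hysort m (Finset.range m) τ
        (le_of_eq (Finset.card_range m)) hτmaps
      calc ∑ i ∈ Finset.range m, max (d i - t) 0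
          = ∑ i ∈ Finset.range m, G t (xs i - ys i) := Finset.sum_congr rfl fun i _ => eG1 i
        _ ≤ ∑ i ∈ Finset.range m, G t (xs i - ys (τ i)) := hsort
        _ = ∑ i ∈ Finset.range m, G t (x' i - y' i) := hre.symm
        _ = ∑ i ∈ Finset.range m, max (D i - t) 0 :=
            (Finset.sum_congr rfl fun i _ => (eG2 i).symm)
    have hDrange : ∑ i ∈ Finset.range m, max (D i - t) 0
        = ∑ i ∈ Finset.range m, max (Ds i - t) 0 := by
      have hρsymm : ∀ a, a < m → ρ.symm a < m := by
        intro a ha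
        have := (hρiff (ρ.symm a)).mpr
        rw [Equiv.apply_symm_apply] at this
        exact this ha
      refine Finset.sum_nbij' (fun i => ρ.symm i) (fun i => ρ i) ?_ ?_ ?_ ?_ ?_
      · intro a ha
        rw [Finset.mem_range] at ha ⊢
        exact hρsymm a ha
      · intro a ha
        rw [Finset.mem_range] at ha ⊢
        exact (hρiff a).mp ha
      · intro a _; exact Equiv.apply_symm_apply ρ a
      · intro a _; exact Equiv.symm_apply_apply ρ a
      · intro a _
        simp only [hDs, Equiv.apply_symm_apply]
    have hc : (k : ℝ) * t + ∑ i ∈ Finset.range m, max (Ds i - t) 0 ≤ partialMax D k := by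
      rcases le_or_gt k m with hkm | hkm
      · have hsplit := Finset.sum_range_add_sum_Ico (fun i => max (Ds i - t) 0) hkm
        have hIco : ∑ i ∈ Finset.Ico k m, max (Ds i - t) 0 = 0 := by
          refine Finset.sum_eq_zero fun i hi => ?_
          obtain ⟨h1, _⟩ := Finset.mem_Ico.mp hi
          have hle : Ds i ≤ t := hDsort k i h1
          exact max_eq_right (by linarith)
        have hhead : ∑ i ∈ Finset.range k, max (Ds i - t) 0
            = ∑ i ∈ Finset.range k, Ds i - (k : ℝ) * t := by
          have hcongr : ∀ i ∈ Finset.range k, max (Ds i - t) 0 = Ds i - t := by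
            intro i hi
            have hik : i < k := Finset.mem_range.mp hi
            have hge : t ≤ Ds i := hDsort i k (le_of_lt hik)
            exact max_eq_left (by linarith)
          rw [Finset.sum_congr rfl hcongr, Finset.sum_sub_distrib, Finset.sum_const,
            Finset.card_range, nsmul_eq_mul]
        rw [← hsplit, hIco, add_zero, hhead, hpmD k]
        linarith
      · have ht0' : t = 0 := by rw [htdef]; exact hDsm k (le_of_lt hkm)
        have hmax : ∀ i, max (Ds i - t) 0 = Ds i := by
          intro i
          rw [ht0', sub_zero]
          exact max_eq_left (hDs0 i)
        have hext : ∑ i ∈ Finset.range m, Ds i = ∑ i ∈ Finset.range k, Ds i := by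
          refine Finset.sum_subset ?_ ?_
          · intro i hi
            rw [Finset.mem_range] at hi ⊢
            omega
          · intro i _ hin
            rw [Finset.mem_range] at hin
            push_neg at hin
            exact hDsm i hin
        rw [Finset.sum_congr rfl (fun i _ => hmax i), hext, ht0', hpmD k]
        linarith
    linarith
  -- majorization in partial-sum form
  have hmajsums : ∀ k, ∑ i ∈ Finset.range k, ds i ≤ ∑ i ∈ Finset.range k, Ds i := by
    intro k
    rw [← hpmd k, ← hpmD k]
    exact hsub k
  -- Ky Fan
  have hKF : Φ.toFun (truncF ds m) ≤ Φ.toFun (truncF Ds m) :=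
    kyFan Φ m ((Finset.range m).filter (fun i => ds i ≠ Ds i)).card ds Ds
      hds0 hDs0 hdsort hDsort hdsm hDsm hmajsums (le_refl _)
  have h1 : Φ.toFun (truncF ds m) = Φ.toFun (truncF d m) := by
    simp only [hds]
    exact Phi_perm Φ d φp m hφiff
  have h2 : Φ.toFun (truncF Ds m) = Φ.toFun (truncF D m) := by
    simp only [hDs]
    exact Phi_perm Φ D ρ m hρiff
  have hfun : (fun i => |decRearr x' i - decRearr y' i|) = d := by
    funext i
    rw [hdx i, hdy i]
  rw [hfun]
  calc Φ.toFun (truncF d m) = Φ.toFun (truncF ds m) := h1.symm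
    _ ≤ Φ.toFun (truncF Ds m) := hKF
    _ = Φ.toFun (truncF D m) := h2

end Part5
section Part6

lemma le_of_forall_pos_le_add' {a b : ℝ} (h : ∀ ε : ℝ, 0 < ε → a ≤ b + ε) : a ≤ b := by
  by_contra hc
  push_neg at hc
  have := h ((a - b) / 2) (by linarith)
  linarith

lemma truncF_split (u v : ℕ → ℝ) (n : ℕ) :
    truncF u n = truncF v n + truncF (fun i => u i - v i) n := by
  ext j
  rw [Finsupp.add_apply, truncF_apply, truncF_apply, truncF_apply]
  by_cases hj : j < n
  · rw [if_pos hj, if_pos hj, if_pos hj]; ring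
  · rw [if_neg hj, if_neg hj, if_neg hj]; ring

lemma Phi_trunc_abs (Φ : SymmetricNorm) (f : ℕ → ℝ) (n : ℕ) :
    Φ.toFun (truncF (fun i => |f i|) n) = Φ.toFun (truncF f n) := by
  refine Phi_abs_eq Φ _ _ fun i => ?_
  rw [truncF_apply, truncF_apply]
  by_cases hi : i < n
  · rw [if_pos hi, if_pos hi, abs_abs]
  · rw [if_neg hi, if_neg hi]

lemma Phi_trunc_sub_le (Φ : SymmetricNorm) (f g : ℕ → ℝ) (n : ℕ) :
    Φ.toFun (truncF (fun i => f i - g i) n) ≤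
      Φ.toFun (truncF f n) + Φ.toFun (truncF g n) := by
  have hsplit : truncF (fun i => f i - g i) n = truncF f n + (-1 : ℝ) • truncF g n := by
    ext j
    rw [Finsupp.add_apply, Finsupp.smul_apply, truncF_apply, truncF_apply, truncF_apply]
    by_cases hj : j < n
    · rw [if_pos hj, if_pos hj, if_pos hj]; simp; ring
    · rw [if_neg hj, if_neg hj, if_neg hj]; simp
  rw [hsplit]
  refine le_trans (Φ.add_le _ _) ?_
  rw [Φ.smul_eq]
  simp

end Part6
/-- For a regular symmetric norm `Φ`, the nonincreasing rearrangement map is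
`1`-Lipschitz on `ℓ_Φ^+`: `Φ(|ξ^↓ - η^↓|) ≤ Φ(|ξ - η|)`. -/
theorem decRearr_lipschitz (Φ : SymmetricNorm) (hΦ : Φ.Regular)
    (ξ η : ℕ → ℝ) (hξ : MemLPhiPlus Φ ξ) (hη : MemLPhiPlus Φ η) :
    Φ.ext (fun i => |decRearr ξ i - decRearr η i|) ≤ Φ.ext (fun i => |ξ i - η i|) := by
  classical
  obtain ⟨hξ0, hξt, Lξ, hξL⟩ := hξ
  obtain ⟨hη0, hηt, Lη, hηL⟩ := hη
  obtain ⟨Cξ, hCξ⟩ := hξt.bddAbove_range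
  obtain ⟨Cη, hCη⟩ := hηt.bddAbove_range
  set C := max Cξ Cη with hCdef
  have hCξ' : ∀ i, ξ i ≤ C := fun i => le_trans (hCξ (Set.mem_range_self i)) (le_max_left _ _)
  have hCη' : ∀ i, η i ≤ C := fun i => le_trans (hCη (Set.mem_range_self i)) (le_max_right _ _)
  have hC0 : (0 : ℝ) ≤ C := le_trans (hξ0 0) (hCξ' 0)
  have hmonoξ : Monotone (fun n => Φ.toFun (truncF ξ n)) := fun n m h => Phi_trunc_mono Φ ξ h
  have hmonoη : Monotone (fun n => Φ.toFun (truncF η n)) := fun n m h => Phi_trunc_mono Φ η h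
  have hbddξ : ∀ n, Φ.toFun (truncF ξ n) ≤ Lξ := hmonoξ.ge_of_tendsto hξL
  have hbddη : ∀ n, Φ.toFun (truncF η n) ≤ Lη := hmonoη.ge_of_tendsto hηL
  set b := fun mm : ℕ => Φ.toFun (truncF (fun i => |ξ i - η i|) mm) with hbdef
  have hbmono : Monotone b := fun n m h => Phi_trunc_mono Φ _ h
  have hbub : ∀ mm, b mm ≤ Lξ + Lη := by
    intro mm
    rw [hbdef]
    simp only
    rw [show (fun i => |ξ i - η i|) = (fun i => |(fun j => ξ j - η j) i|) from rfl,
      Phi_trunc_abs Φ (fun j => ξ j - η j) mm]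
    exact le_trans (Phi_trunc_sub_le Φ ξ η mm) (add_le_add (hbddξ mm) (hbddη mm))
  have hbbdd : BddAbove (Set.range b) := ⟨Lξ + Lη, by rintro _ ⟨mm, rfl⟩; exact hbub mm⟩
  have hbT : Tendsto b atTop (nhds (⨆ mm, b mm)) := tendsto_atTop_ciSup hbmono hbbdd
  set B := ⨆ mm, b mm with hBdef
  have hbB : ∀ mm, b mm ≤ B := fun mm => le_ciSup hbbdd mm
  have hRHS : Φ.ext (fun i => |ξ i - η i|) = B := by
    unfold SymmetricNorm.ext
    exact hbT.limUnder_eq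
  set a := fun n : ℕ => Φ.toFun (truncF (fun i => |decRearr ξ i - decRearr η i|) n) with hadef
  have hamono : Monotone a := fun n m h => Phi_trunc_mono Φ _ h
  have haB : ∀ n, a n ≤ B := by
    intro n
    refine le_of_forall_pos_le_add' fun ε' hε' => ?_
    set ε := ε' / (4 * (n : ℝ) + 4) with hεdef
    have hε : 0 < ε := by
      rw [hεdef]
      exact div_pos hε' (by positivity)
    choose Mξ hMξ using fun k => pM_approx ξ C hξ0 hCξ' k ε hε
    choose Mη hMη using fun k => pM_approx η C hη0 hCη' k ε hε
    set m := max (n + 1) (max ((Finset.range (n + 2)).sup Mξ) ((Finset.range (n + 2)).sup Mη))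
      with hmdef
    have hnm : n ≤ m := le_trans (Nat.le_succ n) (le_max_left _ _)
    have hMξm : ∀ k, k ≤ n + 1 → Mξ k ≤ m := by
      intro k hk
      refine le_trans ?_ (le_trans (le_max_left _ _) (le_max_right _ _))
      exact Finset.le_sup (Finset.mem_range.mpr (by omega))
    have hMηm : ∀ k, k ≤ n + 1 → Mη k ≤ m := by
      intro k hk
      refine le_trans ?_ (le_trans (le_max_right _ _) (le_max_right _ _))
      exact Finset.le_sup (Finset.mem_range.mpr (by omega))
    set x' := truncFn ξ m with hx'def
    set y' := truncFn η m with hy'def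
    have hx'0 : ∀ i, 0 ≤ x' i := by
      intro i
      rw [hx'def]
      unfold truncFn
      split_ifs
      exacts [hξ0 i, le_refl 0]
    have hy'0 : ∀ i, 0 ≤ y' i := by
      intro i
      rw [hy'def]
      unfold truncFn
      split_ifs
      exacts [hη0 i, le_refl 0]
    have hx'C : ∀ i, x' i ≤ C := by
      intro i
      rw [hx'def]
      unfold truncFn
      split_ifs
      exacts [hCξ' i, hC0]
    have hy'C : ∀ i, y' i ≤ C := by
      intro i
      rw [hy'def]
      unfold truncFn
      split_ifs
      exacts [hCη' i, hC0]
    have hx'm : ∀ i, m ≤ i → x' i = 0 := by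
      intro i hi
      rw [hx'def]
      unfold truncFn
      rw [if_neg (by omega)]
    have hy'm : ∀ i, m ≤ i → y' i = 0 := by
      intro i hi
      rw [hy'def]
      unfold truncFn
      rw [if_neg (by omega)]
    have hplex : ∀ k, partialMax x' k ≤ partialMax ξ k := by
      intro k
      refine pM_mono x' ξ C ?_ hCξ' k
      intro i
      rw [hx'def]
      unfold truncFn
      split_ifs
      exacts [le_refl _, hξ0 i]
    have hpley : ∀ k, partialMax y' k ≤ partialMax η k := by
      intro k
      refine pM_mono y' η C ?_ hCη' k
      intro i
      rw [hy'def]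
      unfold truncFn
      split_ifs
      exacts [le_refl _, hη0 i]
    have hpgex : ∀ k, k ≤ n + 1 → partialMax ξ k - ε ≤ partialMax x' k := by
      intro k hk
      rw [hx'def]
      exact hMξ k m (hMξm k hk)
    have hpgey : ∀ k, k ≤ n + 1 → partialMax η k - ε ≤ partialMax y' k := by
      intro k hk
      rw [hy'def]
      exact hMη k m (hMηm k hk)
    have hbr : ∀ i, i < n →
        |(|decRearr ξ i - decRearr η i|) - (|decRearr x' i - decRearr y' i|)| ≤ 4 * ε := by
      intro i hi
      have h1 := hplex (i + 1)
      have h2 := hplex i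
      have h3 := hpgex (i + 1) (by omega)
      have h4 := hpgex i (by omega)
      have h1' := hpley (i + 1)
      have h2' := hpley i
      have h3' := hpgey (i + 1) (by omega)
      have h4' := hpgey i (by omega)
      have hX : |decRearr ξ i - decRearr x' i| ≤ 2 * ε := by
        unfold decRearr
        rw [abs_le]
        constructor <;> linarith
      have hY : |decRearr η i - decRearr y' i| ≤ 2 * ε := by
        unfold decRearr
        rw [abs_le]
        constructor <;> linarith
      have habs := abs_abs_sub_abs_le_abs_sub (decRearr ξ i - decRearr η i)
        (decRearr x' i - decRearr y' i)
      refine le_trans habs ?_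
      have e : (decRearr ξ i - decRearr η i) - (decRearr x' i - decRearr y' i)
          = (decRearr ξ i - decRearr x' i) + -(decRearr η i - decRearr y' i) := by ring
      rw [e]
      calc |(decRearr ξ i - decRearr x' i) + -(decRearr η i - decRearr y' i)|
          ≤ |decRearr ξ i - decRearr x' i| + |-(decRearr η i - decRearr y' i)| := abs_add_le _ _
        _ = |decRearr ξ i - decRearr x' i| + |decRearr η i - decRearr y' i| := by rw [abs_neg]
        _ ≤ 4 * ε := by linarith
    have hsplit : a n ≤ Φ.toFun (truncF (fun i => |decRearr x' i - decRearr y' i|) n)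
        + (n : ℝ) * (4 * ε) := by
      rw [hadef]
      simp only
      rw [truncF_split (fun i => |decRearr ξ i - decRearr η i|)
        (fun i => |decRearr x' i - decRearr y' i|) n]
      refine le_trans (Φ.add_le _ _) (add_le_add (le_refl _) ?_)
      refine le_trans (Phi_trunc_le_sum Φ _ n) ?_
      calc ∑ i ∈ Finset.range n, |(|decRearr ξ i - decRearr η i|)
              - (|decRearr x' i - decRearr y' i|)|
          ≤ ∑ _i ∈ Finset.range n, 4 * ε :=
            Finset.sum_le_sum fun i hi => hbr i (Finset.mem_range.mp hi)
        _ = (n : ℝ) * (4 * ε) := by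
            rw [Finset.sum_const, Finset.card_range, nsmul_eq_mul]
    have hfc := finite_core Φ m C x' y' hx'0 hx'C hx'm hy'0 hy'C hy'm
    have hmono2 : Φ.toFun (truncF (fun i => |decRearr x' i - decRearr y' i|) n)
        ≤ Φ.toFun (truncF (fun i => |decRearr x' i - decRearr y' i|) m) :=
      Phi_trunc_mono Φ _ hnm
    have hbm_eq : truncF (fun i => |x' i - y' i|) m = truncF (fun i => |ξ i - η i|) m := by
      ext j
      rw [truncF_apply, truncF_apply]
      by_cases hj : j < m
      · rw [if_pos hj, if_pos hj, hx'def, hy'def]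
        unfold truncFn
        rw [if_pos hj, if_pos hj]
      · rw [if_neg hj, if_neg hj]
    have hend : Φ.toFun (truncF (fun i => |x' i - y' i|) m) ≤ B := by
      rw [hbm_eq]
      exact hbB m
    have hfinal : (n : ℝ) * (4 * ε) ≤ ε' := by
      rw [hεdef, show (n : ℝ) * (4 * (ε' / (4 * (n : ℝ) + 4)))
        = (4 * (n : ℝ) * ε') / (4 * (n : ℝ) + 4) by ring]
      rw [div_le_iff₀ (by positivity : (0 : ℝ) < 4 * (n : ℝ) + 4)]
      nlinarith [hε'.le, Nat.cast_nonneg (α := ℝ) n]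
    linarith
  have habdd : BddAbove (Set.range a) := ⟨B, by rintro _ ⟨nn, rfl⟩; exact haB nn⟩
  have haT : Tendsto a atTop (nhds (⨆ nn, a nn)) := tendsto_atTop_ciSup hamono habdd
  have hLHS : Φ.ext (fun i => |decRearr ξ i - decRearr η i|) = ⨆ nn, a nn := by
    unfold SymmetricNorm.ext
    exact haT.limUnder_eq
  rw [hLHS, hRHS]
  exact ciSup_le haB
end
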